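/- arXiv:1301.7215 — 8 statements merged into one kernel-verified Lean document; each statement's English description precedes it below -/
import Mathlib

section
/- Let n ≥ 2 and 0 ≤ k ≤ n−1. For every polynomial f ∈ MvPolynomial (Fin n × Fin n) ℂ, if f vanishes at every diagonalizable matrix A ∈ Matrix (Fin n) (Fin n) ℂ that is k-degenerate, then f vanishes at every k-degenerate matrix A ∈ Matrix (Fin n) (Fin n) ℂ. (I.e., the diagonalizable matrices form a Zariski dense subset of the variety of k-degenerate complex n×n matrices.) -/
open Polynomial in
private lemma aux_isCoprime_X_sub_C {a b : ℂ} (h : a ≠ b) :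
    IsCoprime (X - C a) (X - C b) := by
  refine ⟨C (b - a)⁻¹, -C (b - a)⁻¹, ?_⟩
  have hba : b - a ≠ 0 := sub_ne_zero.2 (Ne.symm h)
  have : C (b - a)⁻¹ * (X - C a) + -C (b - a)⁻¹ * (X - C b)
      = C ((b - a)⁻¹ * (b - a)) := by
    rw [map_mul, map_sub]; ring
  rw [this, inv_mul_cancel₀ hba, map_one]

open Polynomial in
private lemma aux_dep {N m : ℕ} (B : Matrix (Fin N) (Fin N) ℂ) (p : ℂ[X])
    (hmo : p.Monic) (hdeg : p.natDegree ≤ m) (hann : aeval B p = 0) :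
    ¬ LinearIndependent ℂ (fun r : Fin (m + 1) => B ^ (r : ℕ)) := by
  rw [Fintype.not_linearIndependent_iff]
  refine ⟨fun r => p.coeff r, ?_, ⟨⟨p.natDegree, by omega⟩, ?_⟩⟩
  · have h := aeval_eq_sum_range' (lt_of_le_of_lt hdeg (Nat.lt_succ_self m)) B
    rw [hann] at h
    rw [Fin.sum_univ_eq_sum_range (fun i => p.coeff i • B ^ i) (m + 1)]
    exact h.symm
  · show p.coeff p.natDegree ≠ 0
    rw [hmo.coeff_natDegree]; exact one_ne_zero

open Polynomial in
private lemma aux_minpoly_deg {N m : ℕ} (B : Matrix (Fin N) (Fin N) ℂ)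
    (h : ¬ LinearIndependent ℂ (fun r : Fin (m + 1) => B ^ (r : ℕ))) :
    (minpoly ℂ B).natDegree ≤ m := by
  rw [Fintype.not_linearIndependent_iff] at h
  obtain ⟨g, hsum, i0, hi0⟩ := h
  set q : ℂ[X] := ∑ r : Fin (m + 1), C (g r) * X ^ (r : ℕ) with hq
  have hcoeff : ∀ r : Fin (m + 1), q.coeff r = g r := by
    intro r
    rw [hq, finset_sum_coeff]
    rw [Finset.sum_eq_single r]
    · simp
    · intro b _ hb
      have : (r : ℕ) ≠ (b : ℕ) := fun hrb => hb (Fin.ext hrb.symm)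
      simp [coeff_X_pow, this]
    · simp
  have hq0 : q ≠ 0 := fun h0 => hi0 (by rw [← hcoeff i0, h0, coeff_zero])
  have hann : aeval B q = 0 := by
    rw [hq, map_sum, ← hsum]
    refine Finset.sum_congr rfl fun r _ => ?_
    simp [Algebra.smul_def]
  have hdq : q.natDegree ≤ m := by
    refine natDegree_sum_le_of_forall_le _ _ fun r _ => ?_
    exact le_trans (natDegree_C_mul_le _ _) (by simp [natDegree_X_pow]; omega)
  exact le_trans (natDegree_le_of_dvd (minpoly.dvd ℂ B hann) hq0) hdq


private lemma aux_compl {K V : Type*} [Field K] [AddCommGroup V] [Module K V]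
    [FiniteDimensional K V] {W1 W2 : Submodule K V} (hle : W1 ≤ W2) :
    ∃ U : Submodule K V, U ⊔ W1 = W2 ∧
      Module.finrank K U + Module.finrank K W1 = Module.finrank K W2 := by
  set W' : Submodule K W2 := W1.comap W2.subtype with hW'
  obtain ⟨U', hU'⟩ := Submodule.exists_isCompl W'
  have hc : IsCompl U' W' := hU'.symm
  have hmapW' : W'.map W2.subtype = W1 := by
    rw [hW', Submodule.map_comap_subtype, inf_eq_right.mpr hle]
  refine ⟨U'.map W2.subtype, ?_, ?_⟩
  · rw [← hmapW', ← Submodule.map_sup, hc.codisjoint.eq_top, Submodule.map_subtype_top]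
  · have e1 : Module.finrank K U' + Module.finrank K W' = Module.finrank K W2 :=
      Submodule.finrank_add_eq_of_isCompl hc
    have e2 : Module.finrank K (U'.map W2.subtype) = Module.finrank K U' :=
      (Submodule.equivMapOfInjective _ (Submodule.injective_subtype _) U').symm.finrank_eq
    have e3 : Module.finrank K W' = Module.finrank K W1 :=
      (Submodule.comapSubtypeEquivOfLe hle).finrank_eq
    omega

set_option maxHeartbeats 1600000 in
set_option linter.unusedVariables false in
open Polynomial in
/-- The diagonalizable matrices form a Zariski dense subset of the variety of
`k`-degenerate complex `n × n` matrices: any polynomial vanishing on all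
diagonalizable `k`-degenerate matrices vanishes on all `k`-degenerate matrices. -/
theorem stmt_0 (n k : ℕ) (hn : 2 ≤ n) (hk : k ≤ n - 1)
    (f : MvPolynomial (Fin n × Fin n) ℂ)
    (hvan : ∀ A : Matrix (Fin n) (Fin n) ℂ,
      (∃ P : (Matrix (Fin n) (Fin n) ℂ)ˣ, ∃ d : Fin n → ℂ,
        A = (P : Matrix (Fin n) (Fin n) ℂ) * Matrix.diagonal d *
          ((P⁻¹ : (Matrix (Fin n) (Fin n) ℂ)ˣ) : Matrix (Fin n) (Fin n) ℂ)) →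
      ¬ LinearIndependent ℂ (fun r : Fin (n - k + 1) => A ^ (r : ℕ)) →
      MvPolynomial.eval (fun p => A p.1 p.2) f = 0) :
    ∀ A : Matrix (Fin n) (Fin n) ℂ,
      ¬ LinearIndependent ℂ (fun r : Fin (n - k + 1) => A ^ (r : ℕ)) →
      MvPolynomial.eval (fun p => A p.1 p.2) f = 0 := by
  classical
  intro A hA
  haveI : NeZero n := ⟨by omega⟩
  set m := n - k with hm
  set ψ := (Matrix.toLinAlgEquiv' :
      Matrix (Fin n) (Fin n) ℂ ≃ₐ[ℂ] ((Fin n → ℂ) →ₗ[ℂ] (Fin n → ℂ))) with hψ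
  set φ := ψ A with hφ
  set μ := minpoly ℂ A with hμdef
  have hd : μ.natDegree ≤ m := aux_minpoly_deg A hA
  have hAint : IsIntegral ℂ A := Algebra.IsIntegral.isIntegral A
  have hmono : μ.Monic := minpoly.monic hAint
  have hsplit : μ.Splits := IsAlgClosed.splits μ
  set d := μ.natDegree with hddef
  set L := μ.roots.toList with hL
  have hlen : L.length = d := by
    rw [hL, Multiset.length_toList]
    have := hsplit.natDegree_eq_card_roots
    omega
  have hμprod : μ = (L.map (fun a => X - C a)).prod := by
    conv_lhs => rw [hsplit.eq_prod_roots_of_monic hmono]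
    rw [← Multiset.coe_toList μ.roots, ← hL, Multiset.map_coe, Multiset.prod_coe]
  set Λ : ℕ → ℂ := fun j => L.getD j 0 with hΛ
  set p_ : ℕ → ℂ[X] := fun j => ((L.take j).map (fun a => X - C a)).prod with hp_
  have hp0 : p_ 0 = 1 := by simp [hp_]
  have hpd : ∀ j, d ≤ j → p_ j = μ := by
    intro j hj
    rw [hp_]
    simp only
    rw [List.take_of_length_le (by omega), ← hμprod]
  have hpsucc : ∀ j, j < d → p_ (j + 1) = p_ j * (X - C (Λ j)) := by
    intro j hj
    have hjl : j < L.length := by omega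
    show ((L.take (j+1)).map (fun a => X - C a)).prod = _
    rw [List.take_succ, List.getElem?_eq_getElem hjl]
    simp only [Option.toList_some, List.map_append, List.prod_append, List.map_cons,
      List.map_nil, List.prod_cons, List.prod_nil, mul_one]
    congr 2
    rw [hΛ]
    simp [List.getD_eq_getElem?_getD, List.getElem?_eq_getElem hjl]
  set W : ℕ → Submodule ℂ (Fin n → ℂ) := fun j => LinearMap.ker (aeval φ (p_ j)) with hW
  have hW0 : W 0 = ⊥ := by
    rw [hW]; simp only [hp0, map_one]
    exact LinearMap.ker_id
  have hWd : ∀ j, d ≤ j → W j = ⊤ := by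
    intro j hj
    rw [hW]; simp only [hpd j hj]
    have h0 : aeval φ μ = 0 := by
      rw [hφ, aeval_algHom_apply ψ A μ, minpoly.aeval, map_zero]
    rw [h0, LinearMap.ker_zero]
  have hcomm : ∀ q : ℂ[X], aeval φ q * φ = φ * aeval φ q := by
    intro q
    have h : aeval φ q * aeval φ (X : ℂ[X]) = aeval φ (X : ℂ[X]) * aeval φ q := by
      rw [← map_mul, ← map_mul, mul_comm]
    simpa [aeval_X] using h
  have hWsucc : ∀ j, W j ≤ W (j + 1) := by
    intro j
    rcases lt_or_ge j d with hj | hj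
    · intro v hv
      simp only [hW, LinearMap.mem_ker] at hv ⊢
      rw [hpsucc j hj, mul_comm, map_mul, Module.End.mul_apply, hv, map_zero]
    · intro v hv
      simp only [hW, LinearMap.mem_ker] at hv ⊢
      rw [hpd (j+1) (by omega), ← hpd j hj]
      exact hv
  have hWle : ∀ {a b : ℕ}, a ≤ b → W a ≤ W b := by
    intro a b hab
    induction hab with
    | refl => exact le_rfl
    | step _ ih => exact le_trans ih (hWsucc _)
  have hWinv : ∀ j, ∀ v ∈ W j, φ v ∈ W j := by
    intro j v hv
    simp only [hW, LinearMap.mem_ker] at hv ⊢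
    have h := congrArg (fun g : (Fin n → ℂ) →ₗ[ℂ] (Fin n → ℂ) => g v) (hcomm (p_ j))
    simpa [Module.End.mul_apply, hv] using h
  have hUex : ∀ i : ℕ, ∃ U : Submodule ℂ (Fin n → ℂ), U ⊔ W i = W (i + 1) ∧
      Module.finrank ℂ U + Module.finrank ℂ (W i) = Module.finrank ℂ (W (i + 1)) :=
    fun i => aux_compl (hWsucc i)
  choose U hUsup hUrank using hUex
  have hUle : ∀ i, U i ≤ W (i + 1) := fun i => le_trans le_sup_left (le_of_eq (hUsup i))
  have hranksum : ∀ j, (∑ i ∈ Finset.range j, Module.finrank ℂ (U i)) = Module.finrank ℂ (W j) := by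
    intro j
    induction j with
    | zero => rw [hW0]; simp
    | succ j ih =>
      rw [Finset.sum_range_succ, ih]
      have := hUrank j
      omega
  have hrn : (∑ i ∈ Finset.range d, Module.finrank ℂ (U i)) = n := by
    rw [hranksum d, hWd d le_rfl, finrank_top, Module.finrank_fin_fun]
  have hUspan : ∀ i : ℕ, U i = Submodule.span ℂ
      (Set.range (fun l : Fin (Module.finrank ℂ (U i)) => ((Module.finBasis ℂ (U i)) l : Fin n → ℂ))) := by
    intro i
    have h1 : Submodule.map (U i).subtype
        (Submodule.span ℂ (Set.range (Module.finBasis ℂ (U i)))) = U i := by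
      rw [Module.Basis.span_eq, Submodule.map_subtype_top]
    rw [Submodule.map_span, ← Set.range_comp] at h1
    exact h1.symm
  have hWsup : ∀ j, j ≤ d → W j ≤ ⨆ i : Fin d, U (i : ℕ) := by
    intro j
    induction j with
    | zero => intro _; rw [hW0]; exact bot_le
    | succ j ih =>
      intro hj
      rw [← hUsup j]
      exact sup_le (le_iSup (fun i : Fin d => U (i : ℕ)) ⟨j, by omega⟩) (ih (by omega))
  set σt := (Σ i : Fin d, Fin (Module.finrank ℂ (U (i : ℕ)))) with hσt
  set v : σt → (Fin n → ℂ) := fun s => ((Module.finBasis ℂ (U (s.1 : ℕ))) s.2 : Fin n → ℂ) with hv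
  have hcardσ : Fintype.card σt = n := by
    show Fintype.card (Σ i : Fin d, Fin (Module.finrank ℂ (U (i : ℕ)))) = n
    rw [Fintype.card_sigma]
    simp only [Fintype.card_fin]
    rw [Fin.sum_univ_eq_sum_range (fun i => Module.finrank ℂ (U i)) d]
    exact hrn
  have hspan : ⊤ ≤ Submodule.span ℂ (Set.range v) := by
    rw [← hWd d le_rfl]
    refine le_trans (hWsup d le_rfl) (iSup_le fun i => ?_)
    rw [hUspan (i : ℕ)]
    refine Submodule.span_mono ?_
    rintro x ⟨l, rfl⟩
    exact ⟨⟨i, l⟩, rfl⟩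
  set eqv : Fin n ≃ σt := (Fintype.equivFinOfCardEq hcardσ).symm with heqv
  have hspan' : ⊤ ≤ Submodule.span ℂ (Set.range (v ∘ eqv)) := by
    rwa [Set.range_comp, Equiv.range_eq_univ, Set.image_univ]
  set b : Module.Basis (Fin n) ℂ (Fin n → ℂ) :=
    basisOfTopLeSpanOfCardEqFinrank (v ∘ eqv) hspan'
      (by simp [Module.finrank_fin_fun]) with hb
  have hbv : ⇑b = v ∘ eqv := coe_basisOfTopLeSpanOfCardEqFinrank _ _ _
  set lvl : Fin n → ℕ := fun i => ((eqv i).1 : ℕ) with hlvl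
  set D : (Fin n → ℂ) →ₗ[ℂ] (Fin n → ℂ) := b.constr ℂ (fun i => (lvl i : ℂ) • b i) with hD
  have hDb : ∀ i, D (b i) = (lvl i : ℂ) • b i := fun i => b.constr_basis ℂ _ i
  have hDU : ∀ i : Fin d, ∀ x ∈ U (i : ℕ), D x = ((i : ℕ) : ℂ) • x := by
    intro i x hx
    rw [hUspan (i : ℕ)] at hx
    induction hx using Submodule.span_induction with
    | mem x hx =>
      obtain ⟨l, rfl⟩ := hx
      beta_reduce
      have hgen : ((Module.finBasis ℂ (U (i : ℕ))) l : Fin n → ℂ) = b (eqv.symm ⟨i, l⟩) := by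
        have h2 := congrFun hbv (eqv.symm ⟨i, l⟩)
        rw [h2, Function.comp_apply, congrArg v (Equiv.apply_symm_apply eqv ⟨i, l⟩)]
      rw [hgen, hDb]
      congr 2
      rw [hlvl]
      simp
    | zero => simp
    | add x y _ _ hx hy => rw [map_add, hx, hy, smul_add]
    | smul a x _ hx => rw [map_smul, hx, smul_comm]
  have hDW : ∀ j, j ≤ d → ∀ x ∈ W j, D x ∈ W j := by
    intro j
    induction j with
    | zero =>
      intro _ x hx
      rw [hW0] at hx ⊢
      rw [Submodule.mem_bot] at hx
      simp [hx]
    | succ j ih =>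
      intro hj x hx
      rw [← hUsup j] at hx
      obtain ⟨u, hu, w, hw, rfl⟩ := Submodule.mem_sup.1 hx
      rw [map_add]
      refine Submodule.add_mem _ ?_ ?_
      · rw [hDU ⟨j, by omega⟩ u hu]
        exact Submodule.smul_mem _ _ ((hUle j) hu)
      · exact (hWsucc j) (ih (by omega) w hw)
  have hkey : ∀ (t : ℂ) (j : ℕ), j < d → ∀ x ∈ W (j + 1),
      (φ + t • D) x - (Λ j + t * j) • x ∈ W j := by
    intro t j hj x hx
    rw [← hUsup j] at hx
    obtain ⟨u, hu, w, hw, rfl⟩ := Submodule.mem_sup.1 hx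
    have key_u : (φ + t • D) u - (Λ j + t * j) • u ∈ W j := by
      have hDu : D u = ((j : ℕ) : ℂ) • u := hDU ⟨j, hj⟩ u hu
      have h1 : (φ + t • D) u - (Λ j + t * j) • u = φ u - Λ j • u := by
        simp only [LinearMap.add_apply, LinearMap.smul_apply, hDu]
        rw [add_smul, smul_smul]
        abel
      rw [h1]
      simp only [hW, LinearMap.mem_ker]
      have hu' : aeval φ (p_ (j + 1)) u = 0 := by
        have := hUle j hu
        simpa only [hW, LinearMap.mem_ker] using this
      have h2 : aeval φ (p_ j) (φ u - Λ j • u) = aeval φ (p_ (j + 1)) u := by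
        rw [hpsucc j hj, map_mul, Module.End.mul_apply]
        congr 1
        rw [map_sub, LinearMap.sub_apply, aeval_X, aeval_C, Module.algebraMap_end_apply]
      rw [h2, hu']
    have key_w : (φ + t • D) w - (Λ j + t * j) • w ∈ W j := by
      have h1 : φ w ∈ W j := hWinv j w hw
      have h2 : D w ∈ W j := hDW j (le_of_lt hj) w hw
      have h3 : (φ + t • D) w - (Λ j + t * j) • w = (φ w + t • D w) - (Λ j + t * j) • w := by
        simp [LinearMap.add_apply, LinearMap.smul_apply]
      rw [h3]
      exact Submodule.sub_mem _ (Submodule.add_mem _ h1 (Submodule.smul_mem _ _ h2))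
        (Submodule.smul_mem _ _ hw)
    have hsplit2 : (φ + t • D) (u + w) - (Λ j + t * j) • (u + w)
        = ((φ + t • D) u - (Λ j + t * j) • u) + ((φ + t • D) w - (Λ j + t * j) • w) := by
      rw [map_add, smul_add]
      abel
    rw [hsplit2]
    exact Submodule.add_mem _ key_u key_w
  have hann : ∀ (t : ℂ) (j : ℕ), j ≤ d → ∀ x ∈ W j,
      (aeval (φ + t • D) (∏ l ∈ Finset.range j, (X - C (Λ l + t * l)))) x = 0 := by
    intro t j
    induction j with
    | zero =>
      intro _ x hx
      rw [hW0, Submodule.mem_bot] at hx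
      simp [hx]
    | succ j ih =>
      intro hj x hx
      rw [Finset.prod_range_succ, map_mul, Module.End.mul_apply]
      have hx' : aeval (φ + t • D) (X - C (Λ j + t * j)) x ∈ W j := by
        have h1 : aeval (φ + t • D) (X - C (Λ j + t * j)) x
            = (φ + t • D) x - (Λ j + t * j) • x := by
          rw [map_sub, LinearMap.sub_apply, aeval_X, aeval_C, Module.algebraMap_end_apply]
        rw [h1]
        exact hkey t j (by omega) x hx
      exact ih (by omega) _ hx'
  set Dm := ψ.symm D with hDm
  set bad : Set ℂ := {0} ∪ ⋃ (p : Fin d × Fin d),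
      {t : ℂ | p.1 ≠ p.2 ∧ Λ p.1 + t * p.1 = Λ p.2 + t * p.2} with hbad
  have hbadfin : bad.Finite := by
    refine Set.Finite.union (Set.finite_singleton 0) (Set.finite_iUnion fun p => ?_)
    refine Set.Subsingleton.finite ?_
    intro t1 h1 t2 h2
    obtain ⟨hne, e1⟩ := h1
    obtain ⟨-, e2⟩ := h2
    have hval : (((p.1 : ℕ) : ℂ)) ≠ (((p.2 : ℕ) : ℂ)) := by
      intro h
      exact hne (Fin.ext (Nat.cast_injective h))
    have hz : (t1 - t2) * (((p.1 : ℕ) : ℂ) - ((p.2 : ℕ) : ℂ)) = 0 := by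
      linear_combination e1 - e2
    rcases mul_eq_zero.1 hz with h | h
    · exact sub_eq_zero.1 h
    · exact absurd (sub_eq_zero.1 h) hval
  have hvanish : ∀ t : ℂ, t ∉ bad →
      MvPolynomial.eval (fun pr => (A + t • Dm) pr.1 pr.2) f = 0 := by
    intro t ht
    set μf : Fin d → ℂ := fun l => Λ l + t * l with hμf
    have hne : ∀ l j : Fin d, l ≠ j → μf l ≠ μf j := by
      intro l j hlj heq
      exact ht (Or.inr (Set.mem_iUnion.2 ⟨(l, j), ⟨hlj, heq⟩⟩))
    have hinj : Function.Injective μf := by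
      intro l j h
      by_contra hc
      exact hne l j hc h
    set Bt := A + t • Dm with hBt
    have hψBt : ψ Bt = φ + t • D := by
      rw [hBt, map_add, map_smul, hDm, AlgEquiv.apply_symm_apply, hφ]
    set qt : ℂ[X] := ∏ l ∈ Finset.range d, (X - C (Λ l + t * l)) with hqt
    have hqtmonic : qt.Monic :=
      monic_prod_of_monic _ _ (fun l _ => monic_X_sub_C _)
    have hqtdeg : qt.natDegree = d := by
      rw [hqt, natDegree_prod _ _ (fun l _ => X_sub_C_ne_zero _)]
      simp only [natDegree_X_sub_C]
      simp
    have hannE : ∀ x, aeval (φ + t • D) qt x = 0 := by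
      intro x
      exact hann t d le_rfl x (by rw [hWd d le_rfl]; trivial)
    have hannBt : aeval Bt qt = 0 := by
      apply ψ.injective
      rw [map_zero, ← aeval_algHom_apply ψ Bt qt, hψBt]
      exact LinearMap.ext hannE
    have hdep : ¬ LinearIndependent ℂ (fun r : Fin (m + 1) => Bt ^ (r : ℕ)) :=
      aux_dep Bt qt hqtmonic (le_trans (le_of_eq hqtdeg) hd) hannBt
    -- diagonalizability
    set EB : Module.End ℂ (Fin n → ℂ) := φ + t • D with hEB
    have hsup : (⨆ l : Fin d, Module.End.eigenspace EB (μf l)) = ⊤ := by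
      rw [hEB]
      refine le_antisymm le_top ?_
      have claim : ∀ j : ℕ, j ≤ d →
          LinearMap.ker (aeval (φ + t • D) (∏ l ∈ Finset.range j, (X - C (Λ l + t * l))))
            ≤ ⨆ l : Fin d, Module.End.eigenspace (φ + t • D) (μf l) := by
        intro j
        induction j with
        | zero =>
          intro _
          rw [Finset.prod_range_zero, map_one, Module.End.one_eq_id, LinearMap.ker_id]
          exact bot_le
        | succ j ih =>
          intro hj
          rw [Finset.prod_range_succ]
          have hcop : IsCoprime (∏ l ∈ Finset.range j, (X - C (Λ l + t * l)))
              (X - C (Λ j + t * j)) := by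
            refine IsCoprime.prod_left fun l hl => ?_
            refine aux_isCoprime_X_sub_C ?_
            have hlj : l < j := Finset.mem_range.1 hl
            exact hne ⟨l, by omega⟩ ⟨j, by omega⟩ (by simp [Fin.ext_iff]; omega)
          rw [← Polynomial.sup_ker_aeval_eq_ker_aeval_mul_of_coprime _ hcop]
          refine sup_le (ih (by omega)) ?_
          have heig : LinearMap.ker (aeval (φ + t • D) (X - C (Λ j + t * j)))
              = Module.End.eigenspace (φ + t • D) (μf ⟨j, by omega⟩) := by
            ext x
            rw [LinearMap.mem_ker, Module.End.mem_eigenspace_iff, map_sub,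
              LinearMap.sub_apply, aeval_X, aeval_C, Module.algebraMap_end_apply,
              sub_eq_zero]
          rw [heig]
          exact le_iSup (fun l : Fin d => Module.End.eigenspace (φ + t • D) (μf l)) ⟨j, by omega⟩
      have htop : LinearMap.ker (aeval (φ + t • D) qt) = ⊤ := by
        rw [LinearMap.ker_eq_top]
        exact LinearMap.ext hannE
      rw [← htop]
      exact claim d le_rfl
    have hind : iSupIndep (fun l : Fin d => Module.End.eigenspace EB (μf l)) :=
      (Module.End.eigenspaces_iSupIndep EB).comp hinj
    have hinternal : DirectSum.IsInternal
        (fun l : Fin d => Module.End.eigenspace EB (μf l)) :=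
      (DirectSum.isInternal_submodule_iff_iSupIndep_and_iSup_eq_top _).2 ⟨hind, hsup⟩
    set bs : ∀ l : Fin d,
        Module.Basis (Fin (Module.finrank ℂ (Module.End.eigenspace EB (μf l)))) ℂ
          (Module.End.eigenspace EB (μf l)) :=
      fun l => Module.finBasis ℂ _ with hbs
    set cb := hinternal.collectedBasis bs with hcb
    have hcard2 : Fintype.card
        (Σ l : Fin d, Fin (Module.finrank ℂ (Module.End.eigenspace EB (μf l)))) = n :=
      (Module.finrank_eq_card_basis cb).symm.trans (Module.finrank_fin_fun ℂ)
    set eqv2 := Fintype.equivFinOfCardEq hcard2 with heqv2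
    set b2 := cb.reindex eqv2 with hb2def
    set dvec : Fin n → ℂ := fun i => μf (eqv2.symm i).1 with hdvec
    have hb2 : ∀ i, EB (b2 i) = dvec i • b2 i := by
      intro i
      rw [hb2def, Module.Basis.reindex_apply]
      have hmem := hinternal.collectedBasis_mem bs (eqv2.symm i)
      rw [← hcb] at hmem
      exact Module.End.mem_eigenspace_iff.1 hmem
    set e := Pi.basisFun ℂ (Fin n) with he
    have hdiag : LinearMap.toMatrix b2 b2 EB = Matrix.diagonal dvec := by
      ext i j
      rw [LinearMap.toMatrix_apply, hb2 j, map_smul, Module.Basis.repr_self]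
      rw [Finsupp.smul_apply, Finsupp.single_apply, Matrix.diagonal_apply]
      rcases eq_or_ne i j with h | h
      · subst h; simp
      · simp [h, Ne.symm h]
    have hψlin : ψ Bt = Matrix.toLin' Bt := by
      apply LinearMap.ext
      intro x
      rw [hψ, Matrix.toLinAlgEquiv'_apply, Matrix.toLin'_apply]
    have h6 : LinearMap.toMatrix e e EB = Bt := by
      rw [← hψBt, he, LinearMap.toMatrix_eq_toMatrix', hψlin, LinearMap.toMatrix'_toLin']
    have h5 := basis_toMatrix_mul_linearMap_toMatrix_mul_basis_toMatrix
      (b := e) (b' := b2) (c := e) (c' := b2) (f := EB)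
    rw [hdiag, h6] at h5
    have hPQ : (e.toMatrix b2) * (b2.toMatrix e) = 1 := Module.Basis.toMatrix_mul_toMatrix_flip e b2
    have hQP : (b2.toMatrix e) * (e.toMatrix b2) = 1 := Module.Basis.toMatrix_mul_toMatrix_flip b2 e
    refine hvan Bt ⟨⟨e.toMatrix b2, b2.toMatrix e, hPQ, hQP⟩, dvec, ?_⟩ hdep
    exact h5.symm
  set g : Polynomial ℂ := MvPolynomial.aeval
      (fun pr : Fin n × Fin n =>
        Polynomial.C (A pr.1 pr.2) + Polynomial.C (Dm pr.1 pr.2) * Polynomial.X) f with hg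
  have hgeval : ∀ t : ℂ, g.eval t
      = MvPolynomial.eval (fun pr => (A + t • Dm) pr.1 pr.2) f := by
    intro t
    have h1 : g.eval t = (Polynomial.aeval (R := ℂ) t) g := by
      rw [Polynomial.coe_aeval_eq_eval]
    rw [h1, hg, MvPolynomial.comp_aeval_apply]
    have h2 : (fun i : Fin n × Fin n => (Polynomial.aeval (R := ℂ) t)
        (Polynomial.C (A i.1 i.2) + Polynomial.C (Dm i.1 i.2) * Polynomial.X))
        = fun pr : Fin n × Fin n => (A + t • Dm) pr.1 pr.2 := by
      funext pr
      rw [map_add, map_mul, Polynomial.aeval_C, Polynomial.aeval_C, Polynomial.aeval_X]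
      show A pr.1 pr.2 + Dm pr.1 pr.2 * t = (A + t • Dm) pr.1 pr.2
      rw [Matrix.add_apply, Matrix.smul_apply, smul_eq_mul]
      ring
    rw [h2, ← MvPolynomial.coe_aeval_eq_eval]
    rfl
  have hg0 : g = 0 := by
    by_contra hne0
    have hfin := Polynomial.finite_setOf_isRoot hne0
    have hsub : badᶜ ⊆ {x | g.IsRoot x} := by
      intro t ht
      show g.eval t = 0
      rw [hgeval t]
      exact hvanish t ht
    exact (hbadfin.infinite_compl.mono hsub) hfin
  have hfinal : MvPolynomial.eval (fun pr => A pr.1 pr.2) f = Polynomial.eval 0 g := by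
    rw [hgeval 0]
    simp
  rw [hfinal, hg0, Polynomial.eval_zero]
end

section
/- Let n ≥ 2 and 0 ≤ k ≤ n−1. Let X be the generic n×n matrix over MvPolynomial (Fin n × Fin n) ℂ (its (i,j) entry is the variable indexed by (i,j)), and consider the (n−k+1) × n² matrix over this polynomial ring whose row indexed by r ∈ {0,1,…,n−k} lists the n² entries of X^r. Let J be the ideal generated by all (n−k+1)×(n−k+1) minors of this matrix (determinants of submatrices obtained by choosing n−k+1 of the n² columns). Then the radical of J equals the vanishing ideal of the set of k-degenerate matrices; that is, f lies in the radical of J if and only if f(A) = 0 for every k-degenerate A ∈ Matrix (Fin n) (Fin n) ℂ. -/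
open Matrix

/-- Evaluating a minor polynomial at a matrix gives the corresponding minor of powers. -/
lemma eval_minor_aux (n m : ℕ) (X : Matrix (Fin n) (Fin n) (MvPolynomial (Fin n × Fin n) ℂ))
    (hX : ∀ i j, X i j = MvPolynomial.X (i, j)) (A : Matrix (Fin n) (Fin n) ℂ)
    (c : Fin m → Fin n × Fin n) :
    MvPolynomial.eval (fun p => A p.1 p.2)
      (Matrix.det (Matrix.of fun r s : Fin m => (X ^ (r : ℕ)) (c s).1 (c s).2))
      = Matrix.det (Matrix.of fun r s : Fin m => (A ^ (r : ℕ)) (c s).1 (c s).2) := by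
  set φ := MvPolynomial.eval (fun p : Fin n × Fin n => A p.1 p.2) with hφ
  have hXA : X.map φ = A := by
    ext i j
    simp [Matrix.map_apply, hX i j, hφ]
  have hpow : ∀ r : ℕ, (X ^ r).map φ = A ^ r := fun r => by
    rw [← RingHom.mapMatrix_apply, map_pow, RingHom.mapMatrix_apply, hXA]
  rw [RingHom.map_det]
  congr 1
  ext r s
  have := congrFun (congrFun (hpow (r : ℕ)) (c s).1) (c s).2
  simpa [Matrix.map_apply] using this

/-- If a family of vectors indexed by `Fin m` in `α → ℂ` is linearly independent,
then some `m × m` minor (choice of `m` distinct coordinates) is nonzero. -/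
lemma key_minor {m : ℕ} {α : Type*} [Fintype α] (v : Fin m → α → ℂ)
    (hv : LinearIndependent ℂ v) :
    ∃ c : Fin m → α, Function.Injective c ∧
      Matrix.det (Matrix.of fun r s => v r (c s)) ≠ 0 := by
  classical
  have hrank : (Matrix.of v : Matrix (Fin m) α ℂ).rank = m := by
    have h : LinearIndependent ℂ (Matrix.of v : Matrix (Fin m) α ℂ) := hv
    simpa using h.rank_matrix
  have hspan : Submodule.span ℂ (Set.range (Matrix.of v : Matrix (Fin m) α ℂ)ᵀ) = ⊤ := by
    apply Submodule.eq_top_of_finrank_eq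
    rw [show Set.range (Matrix.of v : Matrix (Fin m) α ℂ)ᵀ = Set.range (Matrix.of v : Matrix (Fin m) α ℂ).col from rfl,
      ← Matrix.rank_eq_finrank_span_cols, hrank, Module.finrank_pi]
    simp
  obtain ⟨b, hb_sub, hb_span, hb_li⟩ :=
    exists_linearIndependent ℂ (Set.range (Matrix.of v : Matrix (Fin m) α ℂ)ᵀ)
  rw [hspan] at hb_span
  let B : Module.Basis b ℂ (Fin m → ℂ) := Module.Basis.mk hb_li (by rw [Subtype.range_coe, hb_span])
  haveI : Fintype b := FiniteDimensional.fintypeBasisIndex B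
  have hcard : Fintype.card b = m := by
    have h1 := Module.finrank_eq_card_basis B
    rw [Module.finrank_pi] at h1
    simpa using h1.symm
  let e : Fin m ≃ b := (Fintype.equivFinOfCardEq hcard).symm
  have hmem : ∀ i : Fin m, ((e i : Fin m → ℂ)) ∈
      Set.range (Matrix.of v : Matrix (Fin m) α ℂ)ᵀ := fun i => hb_sub (e i).2
  choose c hc using hmem
  refine ⟨c, ?_, ?_⟩
  · intro i j hij
    apply e.injective
    apply Subtype.ext
    rw [← hc i, ← hc j, hij]
  · have hcols : LinearIndependent ℂ
        (fun s : Fin m => (Matrix.of fun r t : Fin m => v r (c t))ᵀ s) := by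
      have heq : (fun s : Fin m => (Matrix.of fun r t : Fin m => v r (c t))ᵀ s)
          = fun s : Fin m => ((e s : Fin m → ℂ)) := by
        funext s
        rw [← hc s]
        rfl
      rw [heq]
      exact hb_li.comp e e.injective
    have hu := Matrix.linearIndependent_cols_iff_isUnit.mp hcols
    rw [Matrix.isUnit_iff_isUnit_det] at hu
    exact isUnit_iff_ne_zero.mp hu

/-- The radical of the ideal generated by the `(n-k+1) × (n-k+1)` minors of the matrix
whose rows list the entries of the powers `X^0, …, X^{n-k}` of the generic matrix equals
the vanishing ideal of the set of `k`-degenerate matrices. -/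
theorem stmt_4 (n k : ℕ) (hn : 2 ≤ n) (hk : k ≤ n - 1)
    (X : Matrix (Fin n) (Fin n) (MvPolynomial (Fin n × Fin n) ℂ))
    (hX : ∀ i j, X i j = MvPolynomial.X (i, j))
    (J : Ideal (MvPolynomial (Fin n × Fin n) ℂ))
    (hJ : J = Ideal.span { d | ∃ c : Fin (n - k + 1) → Fin n × Fin n, Function.Injective c ∧
      d = Matrix.det (Matrix.of fun r s : Fin (n - k + 1) => (X ^ (r : ℕ)) (c s).1 (c s).2) }) :
    ∀ f : MvPolynomial (Fin n × Fin n) ℂ, f ∈ J.radical ↔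
      ∀ A : Matrix (Fin n) (Fin n) ℂ,
        ¬ LinearIndependent ℂ (fun r : Fin (n - k + 1) => A ^ (r : ℕ)) →
        MvPolynomial.eval (fun p => A p.1 p.2) f = 0 := by
  classical
  intro f
  subst hJ
  rw [← MvPolynomial.vanishingIdeal_zeroLocus_eq_radical (K := ℂ), MvPolynomial.mem_vanishingIdeal_iff]
  constructor
  · intro hf A hA
    apply hf
    rw [MvPolynomial.mem_zeroLocus_iff]
    intro p hp
    have hS : { d | ∃ c : Fin (n - k + 1) → Fin n × Fin n, Function.Injective c ∧
        d = Matrix.det (Matrix.of fun r s : Fin (n - k + 1) =>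
          (X ^ (r : ℕ)) (c s).1 (c s).2) } ⊆
        ↑(RingHom.ker (MvPolynomial.eval (fun p : Fin n × Fin n => A p.1 p.2))) := by
      rintro d ⟨c, hcinj, rfl⟩
      simp only [SetLike.mem_coe, RingHom.mem_ker]
      rw [eval_minor_aux n (n - k + 1) X hX A c]
      obtain ⟨g, hg, i0, hgi0⟩ := Fintype.not_linearIndependent_iff.mp hA
      refine Matrix.exists_vecMul_eq_zero_iff.mp ⟨g, ?_, ?_⟩
      · intro h0; exact hgi0 (congrFun h0 i0)
      · funext s
        have hent : ∑ i : Fin (n - k + 1), g i * (A ^ (i : ℕ)) (c s).1 (c s).2 = 0 := by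
          have h2 := congrFun (congrFun hg (c s).1) (c s).2
          simpa [Matrix.sum_apply] using h2
        simpa [Matrix.vecMul, dotProduct] using hent
    exact RingHom.mem_ker.mp (Ideal.span_le.mpr hS hp)
  · intro hf x hx
    set A : Matrix (Fin n) (Fin n) ℂ := Matrix.of fun i j => x (i, j) with hA
    have hxA : (fun p : Fin n × Fin n => A p.1 p.2) = x := by
      funext p; cases p; rfl
    by_cases hLI : LinearIndependent ℂ (fun r : Fin (n - k + 1) => A ^ (r : ℕ))
    · exfalso
      let L : Matrix (Fin n) (Fin n) ℂ →ₗ[ℂ] (Fin n × Fin n → ℂ) :=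
        { toFun := fun M p => M p.1 p.2
          map_add' := fun M N => rfl
          map_smul' := fun a M => rfl }
      have hker : LinearMap.ker L = ⊥ := by
        rw [LinearMap.ker_eq_bot]
        intro M N h
        ext i j
        exact congrFun h (i, j)
      have hv := hLI.map' L hker
      obtain ⟨c, hcinj, hdet⟩ := key_minor _ hv
      have hgen := hx _ (Ideal.subset_span ⟨c, hcinj, rfl⟩)
      rw [← hxA] at hgen
      exact hdet ((eval_minor_aux n (n - k + 1) X hX A c).symm.trans hgen)
    · have h := hf A hLI
      rw [hxA] at h
      exact h
end

section
/- Let A ∈ Matrix (Fin 3) (Fin 3) ℂ be such that the family (I₃, A, A²) is linearly dependent over ℂ (equivalently, the minimal polynomial of A has degree at most 2), and set B = A − (trace(A)/3)·I₃. Then: (i) (trace(B²))³ = 54 · (det B)², and (ii) 9·(det B)·B = 3·trace(B²)·B² − (trace(B²))²·I₃ (an identity of 3×3 matrices). -/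
lemma ch3 (M : Matrix (Fin 3) (Fin 3) ℂ) (h : Matrix.trace M = 0) :
    M ^ 3 = (Matrix.trace (M ^ 2) / 2) • M + M.det • (1 : Matrix (Fin 3) (Fin 3) ℂ) := by
  have h' : M 2 2 = -(M 0 0 + M 1 1) := by
    simp [Matrix.trace, Matrix.diag, Fin.sum_univ_three] at h
    linear_combination h
  ext i j
  fin_cases i <;> fin_cases j <;>
    simp [pow_succ, Matrix.mul_apply, Fin.sum_univ_three, Matrix.trace, Matrix.diag,
      Matrix.det_fin_three, Matrix.one_apply, h'] <;> ring

/-- For a `3×3` complex matrix `A` with minimal polynomial of degree at most `2`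
(i.e. `I₃, A, A²` linearly dependent) and `B = A - (tr A / 3) I₃`, we have
`(tr B²)³ = 54 (det B)²` and `9 (det B) B = 3 (tr B²) B² - (tr B²)² I₃`. -/
theorem stmt_6 (A : Matrix (Fin 3) (Fin 3) ℂ)
    (hA : ¬ LinearIndependent ℂ (fun r : Fin 3 => A ^ (r : ℕ)))
    (B : Matrix (Fin 3) (Fin 3) ℂ)
    (hB : B = A - (Matrix.trace A / 3) • (1 : Matrix (Fin 3) (Fin 3) ℂ)) :
    (Matrix.trace (B ^ 2)) ^ 3 = 54 * B.det ^ 2 ∧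
    (9 * B.det) • B =
      (3 * Matrix.trace (B ^ 2)) • B ^ 2
        - (Matrix.trace (B ^ 2)) ^ 2 • (1 : Matrix (Fin 3) (Fin 3) ℂ) := by
  obtain ⟨t, ht⟩ : ∃ t : ℂ, t = Matrix.trace A / 3 := ⟨_, rfl⟩
  rw [← ht] at hB
  have htrB : Matrix.trace B = 0 := by
    rw [hB]
    simp [Matrix.trace_sub, Matrix.trace_smul, Matrix.trace_one, ht]
  rw [Fintype.not_linearIndependent_iff] at hA
  obtain ⟨g, hsum, i0, hi0⟩ := hA
  have hA' : g 0 • (1 : Matrix (Fin 3) (Fin 3) ℂ) + g 1 • A + g 2 • A ^ 2 = 0 := by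
    rw [Fin.sum_univ_three] at hsum
    simpa using hsum
  have hAB : A = B + t • (1 : Matrix (Fin 3) (Fin 3) ℂ) := by
    rw [hB, sub_add_cancel]
  have hA2 : A ^ 2 = B ^ 2 + (2 * t) • B + (t ^ 2) • (1 : Matrix (Fin 3) (Fin 3) ℂ) := by
    rw [hAB, pow_two]
    simp only [add_mul, mul_add, smul_mul_assoc, mul_smul_comm, one_mul, mul_one, smul_smul]
    rw [← pow_two]
    module
  obtain ⟨a, ha⟩ : ∃ a : ℂ, a = g 0 + g 1 * t + g 2 * t ^ 2 := ⟨_, rfl⟩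
  obtain ⟨b, hb2⟩ : ∃ b : ℂ, b = g 1 + 2 * g 2 * t := ⟨_, rfl⟩
  obtain ⟨c, hc2⟩ : ∃ c : ℂ, c = g 2 := ⟨_, rfl⟩
  have hdep : a • (1 : Matrix (Fin 3) (Fin 3) ℂ) + b • B + c • B ^ 2 = 0 := by
    rw [hA2, hAB] at hA'
    rw [ha, hb2, hc2]
    linear_combination (norm := module) hA'
  have hone : (1 : Matrix (Fin 3) (Fin 3) ℂ) ≠ 0 := one_ne_zero
  by_cases hc0 : c = 0
  · have hB0 : B = 0 := by
      by_cases hb0 : b = 0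
      · exfalso
        have ha0 : a = 0 := by
          have h0 : a • (1 : Matrix (Fin 3) (Fin 3) ℂ) = 0 := by
            rw [hc0, hb0] at hdep; simpa using hdep
          exact (smul_eq_zero.mp h0).resolve_right hone
        have h2 : g 2 = 0 := by rw [← hc2]; exact hc0
        have h1 : g 1 = 0 := by linear_combination hb0 - hb2 - 2 * t * h2
        have h0 : g 0 = 0 := by linear_combination ha0 - ha - t * h1 - t ^ 2 * h2
        fin_cases i0 <;> first | exact hi0 h0 | exact hi0 h1 | exact hi0 h2
      · have htr := congrArg Matrix.trace hdep
        rw [hc0] at htr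
        simp only [Matrix.trace_add, Matrix.trace_smul, Matrix.trace_one, Matrix.trace_zero,
          htrB, smul_eq_mul, mul_zero, zero_smul, add_zero, Fintype.card_fin,
          Nat.cast_ofNat, zero_add] at htr
        have ha0 : a = 0 := by
          linear_combination htr / 3
        have hbB : b • B = 0 := by
          rw [hc0, ha0] at hdep; simpa using hdep
        exact (smul_eq_zero.mp hbB).resolve_left hb0
    rw [hB0]
    simp
  · obtain ⟨p, hp⟩ : ∃ p : ℂ, p = -(b / c) := ⟨_, rfl⟩
    obtain ⟨q, hq⟩ : ∃ q : ℂ, q = -(a / c) := ⟨_, rfl⟩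
    have hBsq : B ^ 2 = p • B + q • (1 : Matrix (Fin 3) (Fin 3) ℂ) := by
      have h1 : c • B ^ 2 = (-a) • (1 : Matrix (Fin 3) (Fin 3) ℂ) + (-b) • B := by
        linear_combination (norm := module) hdep
      have h2 := congrArg (fun M => c⁻¹ • M) h1
      simp only [smul_smul, smul_add] at h2
      rw [inv_mul_cancel₀ hc0, one_smul] at h2
      rw [h2, hp, hq, div_eq_inv_mul, div_eq_inv_mul]
      module
    have htr2 : Matrix.trace (B ^ 2) = 3 * q := by
      rw [hBsq]
      simp [Matrix.trace_add, Matrix.trace_smul, Matrix.trace_one, htrB]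
      ring
    have hB3 : B ^ 3 = (p ^ 2 + q) • B + (p * q) • (1 : Matrix (Fin 3) (Fin 3) ℂ) := by
      rw [pow_succ, hBsq, add_mul, smul_mul_assoc, smul_mul_assoc, one_mul, ← pow_two, hBsq]
      module
    have hch := ch3 B htrB
    rw [hB3, htr2] at hch
    have hkey : (p ^ 2 + q - 3 * q / 2) • B
        = (B.det - p * q) • (1 : Matrix (Fin 3) (Fin 3) ℂ) := by
      linear_combination (norm := module) hch
    have hdet : B.det = p * q := by
      have h := congrArg Matrix.trace hkey
      rw [Matrix.trace_smul, Matrix.trace_smul, Matrix.trace_one, htrB] at h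
      simp at h
      linear_combination h
    have hfin : (p ^ 2 - q / 2) • B = 0 := by
      rw [hdet] at hkey
      have h0 : (p ^ 2 + q - 3 * q / 2) • B = (0 : ℂ) • (1 : Matrix (Fin 3) (Fin 3) ℂ) := by
        rw [hkey]; congr 1; ring
      rw [zero_smul] at h0
      rw [← h0]; congr 1; ring
    rcases smul_eq_zero.mp hfin with h | hB0
    · have hq2 : q = 2 * p ^ 2 := by linear_combination -2 * h
      constructor
      · rw [htr2, hdet]
        linear_combination 27 * q ^ 2 * hq2
      · rw [htr2, hdet, hBsq]
        module
    · rw [hB0]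
      simp
end

section
/- Let φ : MvPolynomial (Fin 4) ℂ → MvPolynomial (Fin 2) ℂ be the ℂ-algebra homomorphism determined by x₁ ↦ z², x₂ ↦ z³, x₃ ↦ D, x₄ ↦ z·D, where z and D denote the two variables of MvPolynomial (Fin 2) ℂ and x₁, x₂, x₃, x₄ the four variables of MvPolynomial (Fin 4) ℂ. Then the kernel of φ is generated as an ideal by the four polynomials x₁³ − x₂², x₁·x₄ − x₂·x₃, x₄² − x₁·x₃², x₂·x₄ − x₁²·x₃. -/
open MvPolynomial

namespace Stmt7Aux

noncomputable def φ : MvPolynomial (Fin 4) ℂ →ₐ[ℂ] MvPolynomial (Fin 2) ℂ :=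
  aeval ![(X 0 : MvPolynomial (Fin 2) ℂ) ^ 2, (X 0 : MvPolynomial (Fin 2) ℂ) ^ 3,
    (X 1 : MvPolynomial (Fin 2) ℂ), (X 0 : MvPolynomial (Fin 2) ℂ) * X 1]

noncomputable def jj : MvPolynomial (Fin 2) ℂ →ₐ[ℂ] MvPolynomial (Fin 4) ℂ :=
  aeval ![X 0, X 2]

noncomputable def kk : Polynomial ℂ →ₐ[ℂ] MvPolynomial (Fin 4) ℂ :=
  Polynomial.aeval (X 2)

noncomputable def ll : Polynomial ℂ →ₐ[ℂ] MvPolynomial (Fin 2) ℂ :=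
  Polynomial.aeval (X 1)

noncomputable def ψ : MvPolynomial (Fin 2) ℂ →ₐ[ℂ] MvPolynomial (Fin 2) ℂ :=
  aeval ![(X 0 : MvPolynomial (Fin 2) ℂ) ^ 2, X 1]

noncomputable def II : Ideal (MvPolynomial (Fin 4) ℂ) :=
  Ideal.span
    { (MvPolynomial.X 0 : MvPolynomial (Fin 4) ℂ) ^ 3 - MvPolynomial.X 1 ^ 2,
      MvPolynomial.X 0 * MvPolynomial.X 3 - MvPolynomial.X 1 * MvPolynomial.X 2,
      MvPolynomial.X 3 ^ 2 - MvPolynomial.X 0 * MvPolynomial.X 2 ^ 2,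
      MvPolynomial.X 1 * MvPolynomial.X 3 - MvPolynomial.X 0 ^ 2 * MvPolynomial.X 2 }

lemma g1_mem : (X 0 : MvPolynomial (Fin 4) ℂ) ^ 3 - X 1 ^ 2 ∈ II :=
  Ideal.subset_span (by simp)
lemma g2_mem : (X 0 : MvPolynomial (Fin 4) ℂ) * X 3 - X 1 * X 2 ∈ II :=
  Ideal.subset_span (by simp)
lemma g3_mem : (X 3 : MvPolynomial (Fin 4) ℂ) ^ 2 - X 0 * X 2 ^ 2 ∈ II :=
  Ideal.subset_span (by simp)
lemma g4_mem : (X 1 : MvPolynomial (Fin 4) ℂ) * X 3 - X 0 ^ 2 * X 2 ∈ II :=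
  Ideal.subset_span (by simp)

@[simp] lemma jj_X0 : jj (X 0) = X 0 := by simp [jj]
@[simp] lemma jj_X1 : jj (X 1) = X 2 := by simp [jj]

lemma jj_ll (r : Polynomial ℂ) : jj (ll r) = kk r := by
  rw [ll, kk, ← Polynomial.aeval_algHom_apply, jj_X1]

/-- split a polynomial in x₀, x₁ as (poly in x₁) + x₀ * (rest) -/
lemma split (q : MvPolynomial (Fin 2) ℂ) :
    ∃ r : Polynomial ℂ, ∃ s : MvPolynomial (Fin 2) ℂ, q = ll r + X 0 * s := by
  induction q using MvPolynomial.induction_on with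
  | C a => exact ⟨Polynomial.C a, 0, by simp [ll]⟩
  | add p q hp hq =>
      obtain ⟨r, s, hp⟩ := hp
      obtain ⟨r', s', hq⟩ := hq
      exact ⟨r + r', s + s', by rw [hp, hq, map_add]; ring⟩
  | mul_X p i hp =>
      obtain ⟨r, s, hp⟩ := hp
      fin_cases i
      · exact ⟨0, p, by simp [mul_comm]⟩
      · refine ⟨r * Polynomial.X, s * X 1, ?_⟩
        rw [hp, map_mul]
        simp only [ll, Polynomial.aeval_X, Fin.mk_one, Fin.isValue]
        ring

/-- every polynomial has a normal form modulo II -/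
lemma exists_nf (p : MvPolynomial (Fin 4) ℂ) :
    ∃ q₀ q₁ : MvPolynomial (Fin 2) ℂ, ∃ q₂ : Polynomial ℂ,
      p - (jj q₀ + X 1 * jj q₁ + X 3 * kk q₂) ∈ II := by
  induction p using MvPolynomial.induction_on with
  | C a =>
      refine ⟨C a, 0, 0, ?_⟩
      have hja : jj (C a) = C a := by rw [jj, aeval_C, algebraMap_eq]
      rw [hja, map_zero, map_zero]
      simp
  | add p q hp hq =>
      obtain ⟨a₀, a₁, a₂, hp⟩ := hp
      obtain ⟨b₀, b₁, b₂, hq⟩ := hq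
      refine ⟨a₀ + b₀, a₁ + b₁, a₂ + b₂, ?_⟩
      have := II.add_mem hp hq
      convert this using 1
      simp only [map_add]
      ring
  | mul_X p i hp =>
      obtain ⟨q₀, q₁, q₂, hp⟩ := hp
      fin_cases i <;> simp only [Fin.zero_eta, Fin.mk_one, Fin.reduceFinMk, Fin.isValue]
      · -- multiply by X 0
        refine ⟨q₀ * X 0, q₁ * X 0 + X 1 * ll q₂, 0, ?_⟩
        have key : p * X 0 - (jj (q₀ * X 0) + X 1 * jj (q₁ * X 0 + X 1 * ll q₂) + X 3 * kk 0)
            = (p - (jj q₀ + X 1 * jj q₁ + X 3 * kk q₂)) * X 0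
              + kk q₂ * (X 0 * X 3 - X 1 * X 2) := by
          simp only [map_mul, map_add, map_zero, jj_X0, jj_X1, jj_ll]
          ring
        rw [key]
        exact II.add_mem (II.mul_mem_right _ hp) (II.mul_mem_left _ g2_mem)
      · -- multiply by X 1
        refine ⟨X 0 ^ 3 * q₁ + X 0 ^ 2 * X 1 * ll q₂, q₀, 0, ?_⟩
        have key : p * X 1 - (jj (X 0 ^ 3 * q₁ + X 0 ^ 2 * X 1 * ll q₂) + X 1 * jj q₀ + X 3 * kk 0)
            = (p - (jj q₀ + X 1 * jj q₁ + X 3 * kk q₂)) * X 1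
              + (-(jj q₁)) * (X 0 ^ 3 - X 1 ^ 2)
              + kk q₂ * (X 1 * X 3 - X 0 ^ 2 * X 2) := by
          simp only [map_mul, map_add, map_zero, map_pow, jj_X0, jj_X1, jj_ll]
          ring
        rw [key]
        exact II.add_mem (II.add_mem (II.mul_mem_right _ hp) (II.mul_mem_left _ g1_mem))
          (II.mul_mem_left _ g4_mem)
      · -- multiply by X 2
        refine ⟨q₀ * X 1, q₁ * X 1, q₂ * Polynomial.X, ?_⟩
        have key : p * X 2 - (jj (q₀ * X 1) + X 1 * jj (q₁ * X 1) + X 3 * kk (q₂ * Polynomial.X))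
            = (p - (jj q₀ + X 1 * jj q₁ + X 3 * kk q₂)) * X 2 := by
          simp only [map_mul, jj_X0, jj_X1, kk, Polynomial.aeval_X, Polynomial.map_mul]
          ring
        rw [key]
        exact II.mul_mem_right _ hp
      · -- multiply by X 3
        obtain ⟨r₀, s₀, hq₀⟩ := split q₀
        refine ⟨X 0 ^ 2 * X 1 * q₁ + X 0 * X 1 ^ 2 * ll q₂, X 1 * s₀, r₀, ?_⟩
        have key : p * X 3 - (jj (X 0 ^ 2 * X 1 * q₁ + X 0 * X 1 ^ 2 * ll q₂)
              + X 1 * jj (X 1 * s₀) + X 3 * kk r₀)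
            = (p - (jj q₀ + X 1 * jj q₁ + X 3 * kk q₂)) * X 3
              + jj s₀ * (X 0 * X 3 - X 1 * X 2)
              + jj q₁ * (X 1 * X 3 - X 0 ^ 2 * X 2)
              + kk q₂ * (X 3 ^ 2 - X 0 * X 2 ^ 2) := by
          rw [hq₀]
          simp only [map_mul, map_add, map_pow, jj_X0, jj_X1, jj_ll]
          ring
        rw [key]
        exact II.add_mem (II.add_mem (II.add_mem (II.mul_mem_right _ hp)
          (II.mul_mem_left _ g2_mem)) (II.mul_mem_left _ g4_mem)) (II.mul_mem_left _ g3_mem)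

-- bridging aeval / eval over ℂ
lemma aeval_eq_eval (v : Fin 2 → ℂ) (f : MvPolynomial (Fin 2) ℂ) :
    aeval v f = eval v f := by
  rw [aeval_def, Algebra.algebraMap_self]
  rfl

lemma psi_inj : Function.Injective ψ := by
  rw [injective_iff_map_eq_zero]
  intro f hf
  apply MvPolynomial.funext
  intro x
  obtain ⟨s, hs⟩ : ∃ s : ℂ, s ^ 2 = x 0 := IsAlgClosed.exists_pow_nat_eq (x 0) zero_lt_two
  have hcomp : (aeval ![s, x 1] : MvPolynomial (Fin 2) ℂ →ₐ[ℂ] ℂ).comp ψ = aeval x := by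
    apply algHom_ext
    intro i
    fin_cases i <;> simp [ψ, hs]
  have := congrArg (aeval ![s, x 1]) hf
  rw [← AlgHom.comp_apply, hcomp] at this
  simpa [aeval_eq_eval] using this

lemma ll_inj : Function.Injective ll := by
  have h : (aeval ![(0 : Polynomial ℂ), Polynomial.X] : MvPolynomial (Fin 2) ℂ →ₐ[ℂ] Polynomial ℂ).comp ll
      = Polynomial.aeval Polynomial.X := by
    apply Polynomial.algHom_ext
    simp [ll]
  intro a b hab
  have := congrArg (aeval ![(0 : Polynomial ℂ), Polynomial.X]) hab
  rw [← AlgHom.comp_apply, ← AlgHom.comp_apply, h] at this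
  simpa [Polynomial.aeval_X_left] using this

noncomputable def σσ : MvPolynomial (Fin 2) ℂ →ₐ[ℂ] MvPolynomial (Fin 2) ℂ :=
  aeval ![-X 0, X 1]

lemma σσ_ψ (q : MvPolynomial (Fin 2) ℂ) : σσ (ψ q) = ψ q := by
  have : σσ.comp ψ = ψ := by
    apply algHom_ext; intro i; fin_cases i <;> simp [σσ, ψ]
  calc σσ (ψ q) = σσ.comp ψ q := rfl
  _ = ψ q := by rw [this]

lemma σσ_ll (q : Polynomial ℂ) : σσ (ll q) = ll q := by
  have : σσ.comp ll = ll := by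
    apply Polynomial.algHom_ext; simp [σσ, ll]
  calc σσ (ll q) = σσ.comp ll q := rfl
  _ = ll q := by rw [this]

noncomputable def ττ : MvPolynomial (Fin 2) ℂ →ₐ[ℂ] MvPolynomial (Fin 2) ℂ :=
  aeval ![0, X 1]

lemma ττ_ll (q : Polynomial ℂ) : ττ (ll q) = ll q := by
  have : ττ.comp ll = ll := by
    apply Polynomial.algHom_ext; simp [ττ, ll]
  calc ττ (ll q) = ττ.comp ll q := rfl
  _ = ll q := by rw [this]

/-- the key injectivity statement -/
lemma nf_zero (q₀ q₁ : MvPolynomial (Fin 2) ℂ) (q₂ : Polynomial ℂ)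
    (h : ψ q₀ + X 0 ^ 3 * ψ q₁ + X 0 * X 1 * ll q₂ = 0) :
    q₀ = 0 ∧ q₁ = 0 ∧ q₂ = 0 := by
  have hσ : ψ q₀ - X 0 ^ 3 * ψ q₁ - X 0 * X 1 * ll q₂ = 0 := by
    have := congrArg σσ h
    simp only [map_add, map_mul, map_pow, map_zero, σσ_ψ, σσ_ll] at this
    have hX0 : σσ (X 0) = -X 0 := by simp [σσ]
    have hX1 : σσ (X 1) = X 1 := by simp [σσ]
    rw [hX0, hX1] at this
    linear_combination this
  have hq₀ : ψ q₀ = 0 := by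
    have h2 : (2 : MvPolynomial (Fin 2) ℂ) * ψ q₀ = 0 := by linear_combination h + hσ
    have := mul_eq_zero.mp h2
    rcases this with h' | h'
    · exact absurd h' two_ne_zero
    · exact h'
  have hq₀' : q₀ = 0 := psi_inj (by rw [hq₀, map_zero])
  have hrest : X 0 * (X 0 ^ 2 * ψ q₁ + X 1 * ll q₂) = 0 := by
    linear_combination h - hq₀
  have hF : X 0 ^ 2 * ψ q₁ + X 1 * ll q₂ = 0 := by
    rcases mul_eq_zero.mp hrest with h' | h'
    · exact absurd h' (X_ne_zero 0)
    · exact h'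
  have hq₂ : q₂ = 0 := by
    have := congrArg ττ hF
    simp only [map_add, map_mul, map_pow, map_zero, ττ_ll] at this
    have hX0 : ττ (X 0) = 0 := by simp [ττ]
    have hX1 : ττ (X 1) = X 1 := by simp [ττ]
    rw [hX0, hX1] at this
    have h1 : X 1 * ll q₂ = 0 := by linear_combination this
    rcases mul_eq_zero.mp h1 with h' | h'
    · exact absurd h' (X_ne_zero 1)
    · apply ll_inj; rw [h', map_zero]
  have hq₁ : q₁ = 0 := by
    rw [hq₂, map_zero, mul_zero, add_zero] at hF
    rcases mul_eq_zero.mp hF with h' | h'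
    · exact absurd h' (pow_ne_zero _ (X_ne_zero 0))
    · exact psi_inj (by rw [h', map_zero])
  exact ⟨hq₀', hq₁, hq₂⟩

lemma φ_jj (q : MvPolynomial (Fin 2) ℂ) : φ (jj q) = ψ q := by
  have : φ.comp jj = ψ := by
    apply algHom_ext; intro i; fin_cases i <;> simp [φ, jj, ψ]
  calc φ (jj q) = φ.comp jj q := rfl
  _ = ψ q := by rw [this]

lemma φ_kk (q : Polynomial ℂ) : φ (kk q) = ll q := by
  have : φ.comp kk = ll := by
    apply Polynomial.algHom_ext; simp [φ, kk, ll]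
  calc φ (kk q) = φ.comp kk q := rfl
  _ = ll q := by rw [this]

lemma span_le_ker : II ≤ RingHom.ker φ.toRingHom := by
  rw [II, Ideal.span_le]
  rintro x hx
  simp only [Set.mem_insert_iff, Set.mem_singleton_iff] at hx
  rcases hx with rfl | rfl | rfl | rfl <;>
    · simp only [SetLike.mem_coe, RingHom.mem_ker, AlgHom.toRingHom_eq_coe,
        RingHom.coe_coe, map_sub, map_mul, map_pow, φ, aeval_X]
      simp [Matrix.cons_val_one]
      ring

end Stmt7Aux

/-- The kernel of the ℂ-algebra map `ℂ[x₁,x₂,x₃,x₄] → ℂ[z,D]`,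
`x₁ ↦ z², x₂ ↦ z³, x₃ ↦ D, x₄ ↦ zD`, is generated by
`x₁³ - x₂²`, `x₁x₄ - x₂x₃`, `x₄² - x₁x₃²`, `x₂x₄ - x₁²x₃`. -/
theorem stmt_7 :
    RingHom.ker (MvPolynomial.aeval (R := ℂ)
      ![(MvPolynomial.X 0 : MvPolynomial (Fin 2) ℂ) ^ 2,
        (MvPolynomial.X 0 : MvPolynomial (Fin 2) ℂ) ^ 3,
        (MvPolynomial.X 1 : MvPolynomial (Fin 2) ℂ),
        (MvPolynomial.X 0 : MvPolynomial (Fin 2) ℂ) * MvPolynomial.X 1] :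
      MvPolynomial (Fin 4) ℂ →ₐ[ℂ] MvPolynomial (Fin 2) ℂ) =
    Ideal.span
      { (MvPolynomial.X 0 : MvPolynomial (Fin 4) ℂ) ^ 3 - MvPolynomial.X 1 ^ 2,
        MvPolynomial.X 0 * MvPolynomial.X 3 - MvPolynomial.X 1 * MvPolynomial.X 2,
        MvPolynomial.X 3 ^ 2 - MvPolynomial.X 0 * MvPolynomial.X 2 ^ 2,
        MvPolynomial.X 1 * MvPolynomial.X 3 - MvPolynomial.X 0 ^ 2 * MvPolynomial.X 2 } := by
  open Stmt7Aux in
  show RingHom.ker Stmt7Aux.φ.toRingHom = Stmt7Aux.II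
  apply le_antisymm
  · intro p hp
    rw [RingHom.mem_ker] at hp
    obtain ⟨q₀, q₁, q₂, hnf⟩ := Stmt7Aux.exists_nf p
    have hφnf : Stmt7Aux.φ (p - (Stmt7Aux.jj q₀ + X 1 * Stmt7Aux.jj q₁ + X 3 * Stmt7Aux.kk q₂)) = 0 :=
      Stmt7Aux.span_le_ker hnf
    have heq : Stmt7Aux.ψ q₀ + X 0 ^ 3 * Stmt7Aux.ψ q₁ + X 0 * X 1 * Stmt7Aux.ll q₂ = 0 := by
      have hφX1 : Stmt7Aux.φ (X 1 : MvPolynomial (Fin 4) ℂ) = X 0 ^ 3 := by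
        simp [Stmt7Aux.φ, Matrix.cons_val_one]
      have hφX3 : Stmt7Aux.φ (X 3 : MvPolynomial (Fin 4) ℂ) = X 0 * X 1 := by
        simp [Stmt7Aux.φ]
      have hp' : Stmt7Aux.φ p = 0 := hp
      rw [map_sub, hp', map_add, map_add, map_mul, map_mul, hφX1, hφX3,
        Stmt7Aux.φ_jj, Stmt7Aux.φ_jj, Stmt7Aux.φ_kk] at hφnf
      linear_combination -hφnf
    obtain ⟨h0, h1, h2⟩ := Stmt7Aux.nf_zero q₀ q₁ q₂ heq
    rw [h0, h1, h2] at hnf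
    simpa using hnf
  · exact Stmt7Aux.span_le_ker
end

section
/- For every symmetric matrix A ∈ Matrix (Fin 3) (Fin 3) ℂ (i.e. Aᵀ = A), let p_A ∈ MvPolynomial (Fin 3) ℂ be the homogeneous cubic polynomial in the variables x₁, x₂, x₃ given by the determinant of the 3×3 matrix with columns x, A·x, A²·x (where x is the column vector of variables). Then p_A is harmonic: (∂²/∂x₁² + ∂²/∂x₂² + ∂²/∂x₃²) p_A = 0. Moreover, there exists a symmetric A with p_A ≠ 0 (e.g. A = diag(0,1,2) gives p_A = 2·x₁x₂x₃). -/
open Matrix MvPolynomial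

set_option maxHeartbeats 4000000

/-- For every complex symmetric `3×3` matrix `A`, the cubic form
`p_A(x) = det(x | Ax | A²x)` is harmonic, and `p_A ≠ 0` for some symmetric `A`. -/
theorem stmt_10 :
    (∀ A : Matrix (Fin 3) (Fin 3) ℂ, Aᵀ = A →
      ∑ i : Fin 3, MvPolynomial.pderiv i (MvPolynomial.pderiv i
        (Matrix.det (Matrix.of fun r c : Fin 3 =>
          Matrix.mulVec ((A.map MvPolynomial.C) ^ (c : ℕ))
            (fun l => MvPolynomial.X l) r))) = 0) ∧
    (∃ A : Matrix (Fin 3) (Fin 3) ℂ, Aᵀ = A ∧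
      Matrix.det (Matrix.of fun r c : Fin 3 =>
        Matrix.mulVec ((A.map MvPolynomial.C) ^ (c : ℕ))
          (fun l => MvPolynomial.X l) r) ≠ 0) := by
  constructor
  · intro A hA
    have h01 : A 1 0 = A 0 1 := congrFun (congrFun hA 0) 1
    have h02 : A 2 0 = A 0 2 := congrFun (congrFun hA 0) 2
    have h12 : A 2 1 = A 1 2 := congrFun (congrFun hA 1) 2
    simp only [Matrix.det_fin_three, Matrix.of_apply, Matrix.mulVec, dotProduct,
      Fin.sum_univ_three, Fin.isValue, Fin.val_zero, Fin.val_one, Fin.val_two,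
      pow_zero, pow_one, pow_two, Matrix.one_apply, Matrix.mul_apply, Matrix.map_apply]
    simp only [if_true, if_false, Fin.isValue, one_ne_zero, zero_ne_one,
      show (0:Fin 3) ≠ 1 by decide, show (0:Fin 3) ≠ 2 by decide,
      show (1:Fin 3) ≠ 0 by decide, show (1:Fin 3) ≠ 2 by decide,
      show (2:Fin 3) ≠ 0 by decide, show (2:Fin 3) ≠ 1 by decide,
      ite_true, ite_false, one_mul, zero_mul, zero_add, add_zero, mul_one, mul_zero,
      Fin.sum_univ_three]
    simp only [map_add, map_sub, _root_.map_mul, pderiv_X, pderiv_C, Derivation.leibniz,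
      smul_eq_mul, Pi.single_apply, mul_one, mul_zero, zero_mul, one_mul, zero_add,
      add_zero, if_true, ite_true, ite_false, Fin.isValue, _root_.map_one, _root_.map_zero,
      show (0:Fin 3) ≠ 1 by decide, show (0:Fin 3) ≠ 2 by decide,
      show (1:Fin 3) ≠ 0 by decide, show (1:Fin 3) ≠ 2 by decide,
      show (2:Fin 3) ≠ 0 by decide, show (2:Fin 3) ≠ 1 by decide]
    rw [h01, h02, h12]
    ring
  ·
    refine ⟨Matrix.diagonal ![0, 1, 2], Matrix.diagonal_transpose _, ?_⟩
    intro h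
    have h2 := congrArg (MvPolynomial.eval (fun _ : Fin 3 => (1:ℂ))) h
    simp only [Matrix.det_fin_three, Matrix.of_apply, Matrix.mulVec, dotProduct,
      Fin.sum_univ_three, Fin.isValue, Fin.val_zero, Fin.val_one, Fin.val_two,
      pow_zero, pow_one, pow_two, Matrix.one_apply, Matrix.mul_apply, Matrix.map_apply,
      Matrix.diagonal, Matrix.cons_val_zero, Matrix.cons_val_one, Matrix.head_cons,
      map_add, _root_.map_mul, eval_C, eval_X, _root_.map_zero, _root_.map_one,
      show (0:Fin 3) ≠ 1 by decide, show (0:Fin 3) ≠ 2 by decide,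
      show (1:Fin 3) ≠ 0 by decide, show (1:Fin 3) ≠ 2 by decide,
      show (2:Fin 3) ≠ 0 by decide, show (2:Fin 3) ≠ 1 by decide] at h2
    norm_num [Matrix.cons_val_two, Matrix.tail_cons, Matrix.head_cons] at h2
end

section
/- Let n ≥ 3 and 0 ≤ k ≤ n−3. Let f ∈ MvPolynomial (Fin n × Fin n) ℂ be homogeneous of degree d with d < (n−k)(n−k−1)/2 (i.e. d < binom(n−k, 2)). If f(A) = 0 for every Hermitian matrix A ∈ Matrix (Fin n) (Fin n) ℂ whose powers A^0, A^1, …, A^{n−k−1} are linearly dependent over ℂ (equivalently, whose minimal polynomial has degree at most n−k−1, i.e. A has at most n−k−1 distinct eigenvalues), then f = 0. -/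
open MvPolynomial

/-- A complex mv-polynomial vanishing at all real points is zero. -/
lemma realVanish {σ : Type*} (P : MvPolynomial σ ℂ)
    (h : ∀ x : σ → ℝ, eval (fun i => (x i : ℂ)) P = 0) : P = 0 := by
  classical
  set Pre : MvPolynomial σ ℝ := ∑ m ∈ P.support, monomial m (Complex.re (coeff m P)) with hPre
  set Pim : MvPolynomial σ ℝ := ∑ m ∈ P.support, monomial m (Complex.im (coeff m P)) with hPim
  have cre : ∀ m, coeff m Pre = Complex.re (coeff m P) := by
    intro m
    rw [hPre]
    rw [MvPolynomial.coeff_sum]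
    by_cases hm : m ∈ P.support
    · rw [Finset.sum_eq_single m]
      · simp [coeff_monomial]
      · intro b _ hb; simp [coeff_monomial, hb]
      · intro hnm; exact absurd hm hnm
    · have h0 : coeff m P = 0 := by simpa using hm
      rw [Finset.sum_eq_zero, h0]
      · simp
      · intro b hb
        have : b ≠ m := by rintro rfl; exact hm hb
        simp [coeff_monomial, this]
  have cim : ∀ m, coeff m Pim = Complex.im (coeff m P) := by
    intro m
    rw [hPim, MvPolynomial.coeff_sum]
    by_cases hm : m ∈ P.support
    · rw [Finset.sum_eq_single m]
      · simp [coeff_monomial]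
      · intro b _ hb; simp [coeff_monomial, hb]
      · intro hnm; exact absurd hm hnm
    · have h0 : coeff m P = 0 := by simpa using hm
      rw [Finset.sum_eq_zero, h0]
      · simp
      · intro b hb
        have : b ≠ m := by rintro rfl; exact hm hb
        simp [coeff_monomial, this]
  have hdecomp : P = map (algebraMap ℝ ℂ) Pre + C Complex.I * map (algebraMap ℝ ℂ) Pim := by
    ext m
    rw [coeff_add, coeff_C_mul, coeff_map, coeff_map, cre, cim]
    simp [Complex.ext_iff]
  have evmap : ∀ (Q : MvPolynomial σ ℝ) (x : σ → ℝ),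
      eval (fun i => (x i : ℂ)) (map (algebraMap ℝ ℂ) Q) = ((eval x Q : ℝ) : ℂ) := by
    intro Q x
    rw [eval_map]
    have := MvPolynomial.eval₂_comp_left (algebraMap ℝ ℂ) (RingHom.id ℝ) x Q
    simp only [RingHomCompTriple.comp_eq] at this
    rw [show ((algebraMap ℝ ℂ) (eval₂ (RingHom.id ℝ) x Q) : ℂ) = ((eval₂ (RingHom.id ℝ) x Q : ℝ) : ℂ) from rfl] at this
    rw [show (⇑(algebraMap ℝ ℂ) ∘ x) = fun i => ((x i : ℝ) : ℂ) by funext i; simp [Complex.coe_algebraMap]] at this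
    rw [← this]
    rfl
  have hre : Pre = 0 := by
    apply MvPolynomial.funext
    intro x
    have h1 := h x
    rw [hdecomp] at h1
    simp only [map_add, map_mul, eval_C, evmap] at h1
    rw [Complex.ext_iff] at h1
    simp at h1
    simpa using h1.1
  have him : Pim = 0 := by
    apply MvPolynomial.funext
    intro x
    have h1 := h x
    rw [hdecomp] at h1
    simp only [map_add, map_mul, eval_C, evmap] at h1
    rw [Complex.ext_iff] at h1
    simp at h1
    simpa using h1.2
  rw [hdecomp, hre, him]
  simp

lemma dvd_sub_rename_update {s : Type*} [DecidableEq s] (a b : s)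
    (q : MvPolynomial s ℂ) :
    (X a - X b) ∣ q - rename (Function.update id a b) q := by
  induction q using MvPolynomial.induction_on with
  | C c => simp
  | add p r hp hr =>
      have : p + r - rename (Function.update id a b) (p + r)
          = (p - rename (Function.update id a b) p) + (r - rename (Function.update id a b) r) := by
        rw [map_add]; ring
      rw [this]; exact dvd_add hp hr
  | mul_X p i hp =>
      rw [map_mul, rename_X]
      have key : p * X i - rename (Function.update id a b) p * X (Function.update id a b i)
          = (p - rename (Function.update id a b) p) * X (Function.update id a b i)
            + p * (X i - X (Function.update id a b i)) := by ring
      rw [key]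
      refine dvd_add (Dvd.dvd.mul_right hp _) (Dvd.dvd.mul_left ?_ _)
      by_cases hia : i = a
      · subst hia; rw [Function.update_self]
      · rw [Function.update_of_ne hia]; simp

lemma X_sub_X_ne_zero {s : Type*} [DecidableEq s] {a b : s} (h : a ≠ b) :
    (X a - X b : MvPolynomial s ℂ) ≠ 0 := by
  intro he
  have : (X a : MvPolynomial s ℂ) = X b := by linear_combination he
  exact h (MvPolynomial.X_injective this)

/-- iterated factoring over a finset of increasing pairs -/
lemma prod_pairs_dvd {s : ℕ} (S : Finset (Fin s × Fin s))
    (hS : ∀ p ∈ S, p.1 < p.2) :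
    ∀ Q : MvPolynomial (Fin s) ℂ,
      (∀ p ∈ S, rename (Function.update id p.1 p.2) Q = 0) →
      (∏ p ∈ S, (X p.1 - X p.2)) ∣ Q := by
  classical
  induction S using Finset.cons_induction with
  | empty => intro Q _; simp
  | cons p S hpS ih =>
      intro Q hvan
      have hp1 : p.1 < p.2 := hS p (Finset.mem_cons_self _ _)
      -- factor out X p.1 - X p.2
      have h0 : rename (Function.update id p.1 p.2) Q = 0 :=
        hvan p (Finset.mem_cons_self _ _)
      obtain ⟨Q', hQ'⟩ : (X p.1 - X p.2) ∣ Q := by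
        have := dvd_sub_rename_update p.1 p.2 Q
        rwa [h0, sub_zero] at this
      have hQ'van : ∀ q ∈ S, rename (Function.update id q.1 q.2) Q' = 0 := by
        intro q hq
        have hq1 : q.1 < q.2 := hS q (Finset.mem_cons_of_mem hq)
        have hne : p ≠ q := by rintro rfl; exact hpS hq
        have h1 : rename (Function.update id q.1 q.2) Q = 0 := hvan q (Finset.mem_cons_of_mem hq)
        rw [hQ', map_mul, map_sub, rename_X, rename_X] at h1
        have hd : Function.update id q.1 q.2 p.1 ≠ Function.update id q.1 q.2 p.2 := by
          by_cases h1a : p.1 = q.1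
          · rw [h1a, Function.update_self]
            have hb : p.2 ≠ q.1 := by intro h; exact absurd (h ▸ hp1) (by rw [h1a]; exact lt_irrefl _)
            rw [Function.update_of_ne hb]
            simp only [id]
            intro h
            exact hne (Prod.ext h1a (by rw [← h]))
          · rw [Function.update_of_ne h1a]
            by_cases h1b : p.2 = q.1
            · rw [h1b, Function.update_self]
              simp only [id]
              exact ne_of_lt (lt_trans (h1b ▸ hp1) hq1)
            · rw [Function.update_of_ne h1b]
              simp only [id]
              exact ne_of_lt hp1
        rcases mul_eq_zero.mp h1 with h | h
        · exact absurd h (X_sub_X_ne_zero hd)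
        · exact h
      obtain ⟨h2, hh2⟩ := ih (fun q hq => hS q (Finset.mem_cons_of_mem hq)) Q' hQ'van
      exact ⟨h2, by rw [Finset.prod_cons, hQ', hh2, mul_assoc]⟩

/-- If Q is homogeneous of degree d, V homogeneous of degree D > d and V ∣ Q then Q = 0. -/
lemma eq_zero_of_homog_dvd {s : Type*} {Q V : MvPolynomial s ℂ} {d D : ℕ}
    (hQ : Q.IsHomogeneous d) (hV : V.IsHomogeneous D) (hlt : d < D)
    (hdvd : V ∣ Q) : Q = 0 := by
  classical
  obtain ⟨h, rfl⟩ := hdvd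
  ext m
  by_cases hm : m.degree = d
  · rw [MvPolynomial.coeff_mul, coeff_zero]
    apply Finset.sum_eq_zero
    rintro ⟨u, v⟩ huv
    have hsum : u + v = m := Finset.HasAntidiagonal.mem_antidiagonal.mp huv
    have hdeg : u.degree + v.degree = d := by
      rw [← hm, ← hsum]
      simp [Finsupp.degree_eq_weight_one, map_add]
    have : u.degree ≠ D := by omega
    rw [hV.coeff_eq_zero this, zero_mul]
  · rw [hQ.coeff_eq_zero hm, coeff_zero]

lemma card_lt_pairs (s : ℕ) :
    ((Finset.univ : Finset (Fin s × Fin s)).filter (fun p => p.1 < p.2)).card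
      = Nat.choose s 2 := by
  classical
  set S := (Finset.univ : Finset (Fin s × Fin s)).filter (fun p => p.1 < p.2) with hS
  have hswap : (S.image Prod.swap).card = S.card :=
    Finset.card_image_of_injective _ Prod.swap_injective
  have hdisj : Disjoint S (S.image Prod.swap) := by
    rw [Finset.disjoint_left]
    intro p hp hp'
    obtain ⟨q, hq, hqe⟩ := Finset.mem_image.mp hp'
    have h1 : p.1 < p.2 := (Finset.mem_filter.mp hp).2
    have h2 : q.1 < q.2 := (Finset.mem_filter.mp hq).2
    rw [← hqe] at h1
    simp only [Prod.fst_swap, Prod.snd_swap] at h1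
    exact absurd (h1.trans h2) (lt_irrefl _)
  have hunion : S ∪ S.image Prod.swap = (Finset.univ : Finset (Fin s)).offDiag := by
    ext p
    constructor
    · intro hp
      rcases Finset.mem_union.mp hp with h | h
      · have h1 : p.1 < p.2 := (Finset.mem_filter.mp h).2
        exact Finset.mem_offDiag.mpr ⟨Finset.mem_univ _, Finset.mem_univ _, ne_of_lt h1⟩
      · obtain ⟨q, hq, hqe⟩ := Finset.mem_image.mp h
        have h2 : q.1 < q.2 := (Finset.mem_filter.mp hq).2
        refine Finset.mem_offDiag.mpr ⟨Finset.mem_univ _, Finset.mem_univ _, ?_⟩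
        rw [← hqe]
        exact (ne_of_lt h2).symm
    · intro hp
      have h3 : p.1 ≠ p.2 := (Finset.mem_offDiag.mp hp).2.2
      rcases lt_or_gt_of_ne h3 with h' | h'
      · exact Finset.mem_union.mpr (Or.inl (Finset.mem_filter.mpr ⟨Finset.mem_univ _, h'⟩))
      · refine Finset.mem_union.mpr (Or.inr (Finset.mem_image.mpr ⟨p.swap, ?_, by simp⟩))
        exact Finset.mem_filter.mpr ⟨Finset.mem_univ _, h'⟩
  have hcard2 : s * s - s = S.card + S.card := by
    have h1 := Finset.card_union_of_disjoint hdisj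
    rw [hunion, Finset.offDiag_card] at h1
    simp only [Finset.card_univ, Fintype.card_fin] at h1
    omega
  have hm : s * (s - 1) = s * s - s := by
    cases s with
    | zero => simp
    | succ t => simp [Nat.succ_sub_one]; ring_nf; omega
  rw [Nat.choose_two_right, hm]
  omega

/-- Core: a homogeneous polynomial of degree < choose s 2 killed by all
variable-merging substitutions is zero. -/
lemma core {s : ℕ} (Q : MvPolynomial (Fin s) ℂ) (d : ℕ) (hQ : Q.IsHomogeneous d)
    (hd : d < Nat.choose s 2)
    (hvan : ∀ a b : Fin s, a < b → rename (Function.update id a b) Q = 0) : Q = 0 := by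
  classical
  set S := (Finset.univ : Finset (Fin s × Fin s)).filter (fun p => p.1 < p.2) with hS
  have hdvd : (∏ p ∈ S, (X p.1 - X p.2)) ∣ Q := by
    apply prod_pairs_dvd S (fun p hp => (Finset.mem_filter.mp hp).2)
    intro p hp
    exact hvan p.1 p.2 (Finset.mem_filter.mp hp).2
  have hV : (∏ p ∈ S, (X p.1 - X p.2 : MvPolynomial (Fin s) ℂ)).IsHomogeneous S.card := by
    have := MvPolynomial.IsHomogeneous.prod S (fun p => (X p.1 - X p.2 : MvPolynomial (Fin s) ℂ))
      (fun _ => 1) (fun p _ => ((isHomogeneous_X ℂ p.1).sub (isHomogeneous_X ℂ p.2)))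
    simpa using this
  exact eq_zero_of_homog_dvd hQ hV (by rw [hS, card_lt_pairs]; exact hd) hdvd

lemma main_vanish {t m : ℕ} (hm : 1 ≤ m) (P : MvPolynomial (Fin t) ℂ) {d : ℕ}
    (hP : P.IsHomogeneous d) (hd : d < Nat.choose (m + 1) 2)
    (hvan : ∀ x : Fin t → ℝ, (Finset.image x Finset.univ).card ≤ m →
      eval (fun i => (x i : ℂ)) P = 0) : P = 0 := by
  classical
  have hbase : ∀ j, j ≤ m → ∀ c : Fin t → Fin j, rename c P = 0 := by
    intro j hj c
    apply realVanish
    intro y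
    rw [eval_rename]
    apply hvan
    calc (Finset.image (y ∘ c) Finset.univ).card
        = ((Finset.image c Finset.univ).image y).card := by rw [Finset.image_image]
      _ ≤ (Finset.image c Finset.univ).card := Finset.card_image_le
      _ ≤ (Finset.univ : Finset (Fin j)).card := Finset.card_le_card (Finset.subset_univ _)
      _ = j := by simp
      _ ≤ m := hj
  have T : ∀ j, ∀ c : Fin t → Fin j, rename c P = 0 := by
    intro j
    induction j with
    | zero => exact hbase 0 (Nat.zero_le m)
    | succ j ih =>
        by_cases hjm : j + 1 ≤ m
        · exact hbase (j + 1) hjm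
        · have hmj : m ≤ j := by omega
          intro c
          apply core (rename c P) d hP.rename_isHomogeneous
            (lt_of_lt_of_le hd (Nat.choose_le_choose 2 (by omega)))
          intro a b hab
          rw [rename_rename]
          have hfun : ∀ i, Function.update id a b (c i) ≠ a := by
            intro i
            by_cases h : c i = a
            · rw [h, Function.update_self]; exact (ne_of_lt hab).symm
            · rwa [Function.update_of_ne h]
          choose c' hc' using fun i => Fin.exists_succAbove_eq (hfun i)
          have hcomp : Function.update id a b ∘ c = a.succAbove ∘ c' :=
            funext fun i => (hc' i).symm
          rw [hcomp, ← rename_rename, ih c', map_zero]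
  have := T t id
  rwa [rename_id] at this

open Matrix in
lemma conj_pow_lemma {n : ℕ} (U D : Matrix (Fin n) (Fin n) ℂ) (hU : U * Uᴴ = 1)
    (hU' : Uᴴ * U = 1) :
    ∀ r : ℕ, (U * D * Uᴴ) ^ r = U * D ^ r * Uᴴ := by
  intro r
  induction r with
  | zero => simp [pow_zero, Matrix.mul_one, hU]
  | succ r ih =>
      rw [pow_succ, ih, pow_succ]
      calc U * D ^ r * Uᴴ * (U * D * Uᴴ) = U * D ^ r * (Uᴴ * U) * D * Uᴴ := by
            simp only [Matrix.mul_assoc]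
        _ = U * (D ^ r * D) * Uᴴ := by rw [hU']; simp only [Matrix.mul_one, Matrix.mul_assoc]

open Matrix in
lemma powers_not_indep {n N : ℕ} (x : Fin n → ℝ) (U : Matrix (Fin n) (Fin n) ℂ)
    (hU : U * Uᴴ = 1) (hU' : Uᴴ * U = 1)
    (himg : (Finset.image x Finset.univ).card < N) :
    ¬ LinearIndependent ℂ
      (fun r : Fin N => (U * Matrix.diagonal (fun i => ((x i : ℝ) : ℂ)) * Uᴴ) ^ (r : ℕ)) := by
  classical
  intro hli
  set D := Matrix.diagonal (fun i => ((x i : ℝ) : ℂ)) with hD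
  set V := Finset.image (fun i => ((x i : ℝ) : ℂ)) Finset.univ with hV
  set p := ∏ v ∈ V, (Polynomial.X - Polynomial.C v) with hp
  have hmonic : p.Monic := Polynomial.monic_prod_of_monic _ _ fun v _ => Polynomial.monic_X_sub_C v
  have hdeg : p.natDegree = V.card := by
    rw [hp, Polynomial.natDegree_prod _ _ (fun v _ => Polynomial.X_sub_C_ne_zero v)]
    simp
  have hcard : V.card < N := by
    have : V = (Finset.image x Finset.univ).image (fun r : ℝ => (r : ℂ)) := by
      rw [hV, Finset.image_image]; rfl
    calc V.card ≤ (Finset.image x Finset.univ).card := by rw [this]; exact Finset.card_image_le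
      _ < N := himg
  have hevalx : ∀ i : Fin n, p.eval ((x i : ℝ) : ℂ) = 0 := by
    intro i
    rw [hp, Polynomial.eval_prod]
    apply Finset.prod_eq_zero (Finset.mem_image_of_mem _ (Finset.mem_univ i))
    simp
  have hDsum : (∑ r : Fin N, p.coeff (r : ℕ) • D ^ (r : ℕ)) = 0 := by
    ext i j
    rw [Matrix.sum_apply]
    by_cases hij : i = j
    · subst hij
      have : ∀ r : Fin N, (p.coeff (r : ℕ) • D ^ (r : ℕ)) i i
          = p.coeff (r : ℕ) * ((x i : ℝ) : ℂ) ^ (r : ℕ) := by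
        intro r
        rw [hD, Matrix.diagonal_pow, Matrix.smul_apply, Matrix.diagonal_apply_eq]
        simp
      rw [Finset.sum_congr rfl (fun r _ => this r)]
      rw [Fin.sum_univ_eq_sum_range (fun r => p.coeff r * ((x i : ℝ) : ℂ) ^ r) N]
      rw [← Polynomial.eval_eq_sum_range' (lt_of_le_of_lt (le_of_eq hdeg) hcard)]
      rw [hevalx i]
      simp
    · have : ∀ r : Fin N, (p.coeff (r : ℕ) • D ^ (r : ℕ)) i j = 0 := by
        intro r
        rw [hD, Matrix.diagonal_pow, Matrix.smul_apply, Matrix.diagonal_apply_ne _ hij]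
        simp
      rw [Finset.sum_congr rfl (fun r _ => this r)]
      simp
  have hsum : ∑ r : Fin N, p.coeff (r : ℕ) • (U * D * Uᴴ) ^ (r : ℕ) = 0 := by
    have step : ∀ r : Fin N, p.coeff (r : ℕ) • (U * D * Uᴴ) ^ (r : ℕ)
        = U * (p.coeff (r : ℕ) • D ^ (r : ℕ)) * Uᴴ := by
      intro r
      rw [conj_pow_lemma U D hU hU' (r : ℕ), ← smul_mul_assoc, ← mul_smul_comm]
    rw [Finset.sum_congr rfl (fun r _ => step r), ← Finset.sum_mul, ← Finset.mul_sum, hDsum]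
    simp
  have := Fintype.linearIndependent_iff.mp hli (fun r => p.coeff (r : ℕ)) hsum
    ⟨V.card, hcard⟩
  simp only at this
  rw [← hdeg] at this
  rw [hmonic.coeff_natDegree] at this
  exact one_ne_zero this

lemma eval_aeval' {σ τ : Type*} (v : τ → ℂ) (q : σ → MvPolynomial τ ℂ) (p : MvPolynomial σ ℂ) :
    eval v (aeval q p) = eval (fun i => eval v (q i)) p := by
  rw [aeval_def, MvPolynomial.algebraMap_eq]
  have h := MvPolynomial.eval₂_assoc (f := RingHom.id ℂ) (g := v) q p
  rw [show (eval v) (eval₂ C q p) = eval₂ (RingHom.id ℂ) v (eval₂ C q p) from rfl, ← h]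
  rfl

open Matrix in
lemma conj_entry {n : ℕ} (U : Matrix (Fin n) (Fin n) ℂ) (c : Fin n → ℂ) (i j : Fin n) :
    (U * Matrix.diagonal c * Uᴴ) i j = ∑ l, U i l * star (U j l) * c l := by
  rw [Matrix.mul_assoc, Matrix.mul_apply]
  apply Finset.sum_congr rfl
  intro l _
  rw [Matrix.diagonal_mul, Matrix.conjTranspose_apply]
  ring

open Matrix in
lemma herm_conj {n : ℕ} (U : Matrix (Fin n) (Fin n) ℂ) (x : Fin n → ℝ) :
    (U * Matrix.diagonal (fun i => ((x i : ℝ) : ℂ)) * Uᴴ).IsHermitian := by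
  have hstar : star (fun i => ((x i : ℝ) : ℂ)) = fun i => ((x i : ℝ) : ℂ) := by
    funext i
    simp [Complex.conj_ofReal]
  unfold Matrix.IsHermitian
  rw [Matrix.conjTranspose_mul, Matrix.conjTranspose_mul, Matrix.conjTranspose_conjTranspose,
    Matrix.diagonal_conjTranspose, hstar, Matrix.mul_assoc]

open Matrix in
lemma herm_vanish (n k : ℕ) (hn : 3 ≤ n) (hk : k ≤ n - 3)
    (f : MvPolynomial (Fin n × Fin n) ℂ) (d : ℕ)
    (hf : f.IsHomogeneous d) (hd : d < Nat.choose (n - k) 2)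
    (hvan : ∀ A : Matrix (Fin n) (Fin n) ℂ, A.IsHermitian →
      ¬ LinearIndependent ℂ (fun r : Fin (n - k) => A ^ (r : ℕ)) →
      MvPolynomial.eval (fun p => A p.1 p.2) f = 0) :
    ∀ H : Matrix (Fin n) (Fin n) ℂ, H.IsHermitian →
      MvPolynomial.eval (fun p => H p.1 p.2) f = 0 := by
  classical
  have hnk3 : 3 ≤ n - k := by omega
  set m : ℕ := n - k - 1 with hm
  have hm1 : 1 ≤ m := by omega
  have hmk : m + 1 = n - k := by omega
  intro H hH
  set U : Matrix (Fin n) (Fin n) ℂ := (Matrix.IsHermitian.eigenvectorUnitary hH : Matrix (Fin n) (Fin n) ℂ) with hUdef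
  have hU : U * Uᴴ = 1 := by
    rw [← Matrix.star_eq_conjTranspose]
    exact (Matrix.mem_unitaryGroup_iff).mp (Matrix.IsHermitian.eigenvectorUnitary hH).2
  have hU' : Uᴴ * U = 1 := by
    rw [← Matrix.star_eq_conjTranspose]
    exact (Matrix.mem_unitaryGroup_iff').mp (Matrix.IsHermitian.eigenvectorUnitary hH).2
  set ψ : Fin n × Fin n → MvPolynomial (Fin n) ℂ :=
    fun pq => ∑ l, C (U pq.1 l * star (U pq.2 l)) * X l with hψ
  set P := aeval ψ f with hP
  have hPhom : P.IsHomogeneous d := by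
    have h1 : ∀ pq, (ψ pq).IsHomogeneous 1 := by
      intro pq
      apply MvPolynomial.IsHomogeneous.sum
      intro l _
      exact (isHomogeneous_X ℂ l).C_mul _
    have := hf.aeval ψ h1
    rwa [one_mul] at this
  have hcomp : ∀ x : Fin n → ℝ, eval (fun i => ((x i : ℝ) : ℂ)) P
      = eval (fun pq => (U * Matrix.diagonal (fun i => ((x i : ℝ) : ℂ)) * Uᴴ) pq.1 pq.2) f := by
    intro x
    rw [hP, eval_aeval']
    have hg : (fun i : Fin n × Fin n => eval (fun i => ((x i : ℝ) : ℂ)) (ψ i))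
        = fun pq : Fin n × Fin n =>
            (U * Matrix.diagonal (fun i => ((x i : ℝ) : ℂ)) * Uᴴ) pq.1 pq.2 := by
      funext pq
      rw [hψ]
      simp only [map_sum, eval_mul, eval_C, eval_X]
      rw [conj_entry]
    rw [hg]
  have hP0 : P = 0 := by
    apply main_vanish hm1 P hPhom (by rw [hmk]; exact hd)
    intro x hx
    rw [hcomp x]
    apply hvan _ (herm_conj U x)
    apply powers_not_indep x U hU hU'
    omega
  have h1 := hcomp hH.eigenvalues
  rw [hP0, map_zero] at h1
  have hspec : H = U * Matrix.diagonal (fun i => ((hH.eigenvalues i : ℝ) : ℂ)) * Uᴴ := by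
    have := hH.spectral_theorem
    rw [Unitary.conjStarAlgAut_apply] at this
    rw [← Matrix.star_eq_conjTranspose]
    exact this
  rw [hspec]
  exact h1.symm

/-- For `n ≥ 3` and `0 ≤ k ≤ n-3`, any homogeneous polynomial of degree
`d < binom(n-k, 2)` vanishing on all Hermitian `n×n` matrices with at most
`n-k-1` distinct eigenvalues is zero. -/
theorem stmt_13 (n k : ℕ) (hn : 3 ≤ n) (hk : k ≤ n - 3)
    (f : MvPolynomial (Fin n × Fin n) ℂ) (d : ℕ)
    (hf : f.IsHomogeneous d) (hd : d < Nat.choose (n - k) 2)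
    (hvan : ∀ A : Matrix (Fin n) (Fin n) ℂ, A.IsHermitian →
      ¬ LinearIndependent ℂ (fun r : Fin (n - k) => A ^ (r : ℕ)) →
      MvPolynomial.eval (fun p => A p.1 p.2) f = 0) :
    f = 0 := by
  classical
  have hHerm := herm_vanish n k hn hk f d hf hd hvan
  set ψH : Fin n × Fin n → MvPolynomial (Fin n × Fin n) ℂ := fun pq =>
    if pq.1 = pq.2 then X pq
    else if pq.1 < pq.2 then X pq + C Complex.I * X (pq.2, pq.1)
    else X (pq.2, pq.1) - C Complex.I * X pq with hψH
  set φH : Fin n × Fin n → MvPolynomial (Fin n × Fin n) ℂ := fun pq =>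
    if pq.1 = pq.2 then X pq
    else if pq.1 < pq.2 then C (1/2 : ℂ) * (X pq + X (pq.2, pq.1))
    else C (1/(2*Complex.I)) * (X (pq.2, pq.1) - X pq) with hφH
  have hvan2 : ∀ y : Fin n × Fin n → ℝ, eval (fun v => ((y v : ℝ) : ℂ)) (aeval ψH f) = 0 := by
    intro y
    rw [eval_aeval']
    set B : Matrix (Fin n) (Fin n) ℂ :=
      Matrix.of (fun i j => eval (fun v => ((y v : ℝ) : ℂ)) (ψH (i, j))) with hBdef
    have hBe : (fun pq : Fin n × Fin n => eval (fun v => ((y v : ℝ) : ℂ)) (ψH pq))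
        = fun pq : Fin n × Fin n => B pq.1 pq.2 := rfl
    rw [hBe]
    apply hHerm B
    show B.conjTranspose = B
    ext i j
    rw [Matrix.conjTranspose_apply]
    show star (eval (fun v => ((y v : ℝ) : ℂ)) (ψH (j, i)))
      = eval (fun v => ((y v : ℝ) : ℂ)) (ψH (i, j))
    rcases lt_trichotomy i j with hij | hij | hij
    · rw [hψH]
      simp only [if_neg (ne_of_lt hij), if_pos hij, if_neg (ne_of_gt hij),
        if_neg (not_lt.mpr (le_of_lt hij))]
      simp only [map_add, map_sub, eval_mul, eval_C, eval_X, star_sub, star_mul',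
        Complex.star_def, Complex.conj_I, Complex.conj_ofReal]
      ring
    · subst hij
      rw [hψH]
      simp [Complex.conj_ofReal]
    · rw [hψH]
      simp only [if_neg (ne_of_gt hij), if_pos hij, if_neg (ne_of_lt hij),
        if_neg (not_lt.mpr (le_of_lt hij))]
      simp only [map_add, map_sub, eval_mul, eval_C, eval_X, star_add, star_mul',
        Complex.star_def, Complex.conj_I, Complex.conj_ofReal]
      ring
  have hg0 : aeval ψH f = 0 := realVanish _ hvan2
  have hcompX : ∀ pq : Fin n × Fin n, aeval φH (ψH pq) = X pq := by
    rintro ⟨i, j⟩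
    have hI : Complex.I * (1/(2*Complex.I)) = 1/2 := by
      field_simp
    have hC' : (C (1/2 : ℂ) : MvPolynomial (Fin n × Fin n) ℂ) * 2 = 1 := by
      rw [show (2 : MvPolynomial (Fin n × Fin n) ℂ) = C (2 : ℂ) from (map_ofNat C 2).symm, ← C_mul]
      norm_num
    rcases lt_trichotomy i j with hij | hij | hij
    · rw [hψH]
      simp only [if_neg (ne_of_lt hij), if_pos hij]
      rw [map_add, map_mul, aeval_X, aeval_X, aeval_C]
      rw [hφH]
      simp only [if_neg (ne_of_lt hij), if_pos hij, if_neg (ne_of_gt hij),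
        if_neg (not_lt.mpr (le_of_lt hij))]
      rw [MvPolynomial.algebraMap_eq, ← mul_assoc, ← C_mul, hI]
      linear_combination (X ((i : Fin n), (j : Fin n)) : MvPolynomial (Fin n × Fin n) ℂ) * hC'
    · subst hij
      rw [hψH, hφH]
      simp
    · rw [hψH]
      simp only [if_neg (ne_of_gt hij), if_neg (not_lt.mpr (le_of_lt hij))]
      rw [map_sub, map_mul, aeval_X, aeval_X, aeval_C]
      rw [hφH]
      simp only [if_neg (ne_of_lt hij), if_pos hij, if_neg (ne_of_gt hij),
        if_neg (not_lt.mpr (le_of_lt hij))]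
      rw [MvPolynomial.algebraMap_eq, ← mul_assoc, ← C_mul, hI]
      linear_combination (X ((i : Fin n), (j : Fin n)) : MvPolynomial (Fin n × Fin n) ℂ) * hC'
  have hcompid : (aeval φH).comp (aeval ψH) = AlgHom.id ℂ (MvPolynomial (Fin n × Fin n) ℂ) := by
    apply MvPolynomial.algHom_ext
    intro pq
    simp only [AlgHom.comp_apply, aeval_X, AlgHom.id_apply]
    exact hcompX pq
  have := DFunLike.congr_fun hcompid f
  simp only [AlgHom.comp_apply, AlgHom.id_apply] at this
  rw [hg0, map_zero] at this
  exact this.symm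
end

section
/- Let n ≥ 2 and set N = binom(2n−1, n−1). There exist polynomials q₁, …, q_N ∈ MvPolynomial (Fin n × Fin n) ℂ such that for every Hermitian matrix A ∈ Matrix (Fin n) (Fin n) ℂ with eigenvalues λ₁(A), …, λ_n(A) (listed with multiplicity): ∏_{1≤i<j≤n} (λ_i(A) − λ_j(A))² = Σ_{m=1}^{N} ‖q_m(A)‖², where ‖·‖² denotes the squared complex absolute value. Equivalently, the discriminant of Hermitian n×n matrices is a sum of 2·binom(2n−1, n−1) squares of real polynomial functions (the real and imaginary parts of the q_m). -/
open Matrix MvPolynomial Equiv Finset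

noncomputable section

namespace Stmt16Aux

variable {n : ℕ}

/-- The generic matrix of variables. -/
def Xmat (n : ℕ) : Matrix (Fin n) (Fin n) (MvPolynomial (Fin n × Fin n) ℂ) :=
  Matrix.of fun i j => MvPolynomial.X (i, j)

/-- The symmetrized covariant polynomials. -/
def Spoly (n : ℕ) (j : Fin n → Fin n) : MvPolynomial (Fin n × Fin n) ℂ :=
  ∑ π : Equiv.Perm (Fin n),
    Matrix.det (Matrix.of fun (i k : Fin n) => (Xmat n ^ (k : ℕ)) i (j (π k)))

/-- Value of the covariant on a matrix. -/
def cval (A : Matrix (Fin n) (Fin n) ℂ) (j : Fin n → Fin n) : ℂ :=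
  ∑ π : Equiv.Perm (Fin n),
    Matrix.det (Matrix.of fun (i k : Fin n) => (A ^ (k : ℕ)) i (j (π k)))

lemma eval_Spoly (A : Matrix (Fin n) (Fin n) ℂ) (j : Fin n → Fin n) :
    MvPolynomial.eval (fun p => A p.1 p.2) (Spoly n j) = cval A j := by
  classical
  set φ : MvPolynomial (Fin n × Fin n) ℂ →+* ℂ := (MvPolynomial.eval fun p => A p.1 p.2)
  have hX : (Xmat n).map φ = A := by
    ext i k
    simp [Xmat, φ]
  have hpow : ∀ k : ℕ, (Xmat n ^ k).map φ = A ^ k := by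
    intro k
    have := map_pow (φ.mapMatrix) (Xmat n) k
    simpa [RingHom.mapMatrix_apply, hX] using this
  unfold Spoly cval
  rw [map_sum]
  refine Finset.sum_congr rfl fun π _ => ?_
  rw [RingHom.map_det]
  congr 1
  ext i k
  have := congrFun (congrFun (hpow k) i) (j (π k))
  simpa [Matrix.map_apply] using this

lemma cval_comp (A : Matrix (Fin n) (Fin n) ℂ) (j : Fin n → Fin n)
    (τ : Equiv.Perm (Fin n)) : cval A (j ∘ τ) = cval A j := by
  unfold cval
  refine Fintype.sum_equiv (Equiv.mulLeft τ) _ _ fun π => ?_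
  rfl

section Herm

variable {A : Matrix (Fin n) (Fin n) ℂ} (hA : A.IsHermitian)

def U (hA : A.IsHermitian) : Matrix (Fin n) (Fin n) ℂ := hA.eigenvectorUnitary

def lc (hA : A.IsHermitian) : Fin n → ℂ := fun i => (hA.eigenvalues i : ℂ)

lemma hUU : star (U hA) * U hA = 1 :=
  Matrix.mem_unitaryGroup_iff'.mp (hA.eigenvectorUnitary).2

lemma hUU' : U hA * star (U hA) = 1 :=
  Matrix.mem_unitaryGroup_iff.mp (hA.eigenvectorUnitary).2

lemma spec : A = U hA * Matrix.diagonal (fun a => lc hA a) * star (U hA) := by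
  have := hA.spectral_theorem
  rw [Unitary.conjStarAlgAut_apply] at this
  exact this

lemma pow_conj {u d : Matrix (Fin n) (Fin n) ℂ} (h1 : star u * u = 1) (h2 : u * star u = 1)
    (k : ℕ) : (u * d * star u) ^ k = u * d ^ k * star u := by
  induction k with
  | zero => simp [h2]
  | succ k ih =>
    rw [pow_succ, ih, pow_succ]
    calc u * d ^ k * star u * (u * d * star u)
        = u * d ^ k * (star u * u) * d * star u := by simp only [Matrix.mul_assoc]
      _ = u * (d ^ k * d) * star u := by rw [h1]; simp only [Matrix.mul_one, Matrix.mul_assoc]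

lemma hpow (k : ℕ) :
    A ^ k = U hA * Matrix.diagonal (fun a => lc hA a ^ k) * star (U hA) := by
  conv_lhs => rw [spec hA]
  rw [pow_conj (hUU hA) (hUU' hA)]
  rw [Matrix.diagonal_pow]
  rfl

lemma factor1 (j' : Fin n → Fin n) :
    (Matrix.of fun (i k : Fin n) => (A ^ (k : ℕ)) i (j' k)) =
      U hA * Matrix.of (fun (a k : Fin n) => lc hA a ^ (k : ℕ) * star (U hA (j' k) a)) := by
  ext i k
  rw [Matrix.mul_apply]
  simp only [Matrix.of_apply]
  rw [hpow hA (k : ℕ), Matrix.mul_apply]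
  refine Finset.sum_congr rfl fun a _ => ?_
  rw [Matrix.mul_diagonal]
  simp [Matrix.star_apply, mul_assoc]

def Qv (hA : A.IsHermitian) (j : Fin n → Fin n) : ℂ :=
  ∑ ρ : Equiv.Perm (Fin n), ∏ m, star (U hA (j (ρ m)) m)

lemma core_identity (Um : Matrix (Fin n) (Fin n) ℂ) (lcv : Fin n → ℂ) (j : Fin n → Fin n) :
    ∑ π : Equiv.Perm (Fin n),
      (Matrix.of fun (a k : Fin n) => lcv a ^ (k : ℕ) * star (Um (j (π k)) a)).det
    = (Matrix.vandermonde lcv).det *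
        ∑ ρ : Equiv.Perm (Fin n), ∏ m, star (Um (j (ρ m)) m) := by
  classical
  have hdet : ∀ π : Equiv.Perm (Fin n),
      (Matrix.of fun (a k : Fin n) => lcv a ^ (k : ℕ) * star (Um (j (π k)) a)).det
      = ∑ σ : Equiv.Perm (Fin n), ((Equiv.Perm.sign σ : ℤ) : ℂ) *
          ∏ k, lcv (σ k) ^ (k : ℕ) * star (Um (j (π k)) (σ k)) := by
    intro π
    rw [Matrix.det_apply']
    simp only [Matrix.of_apply]
  simp only [hdet]
  rw [Finset.sum_comm]
  have hinner : ∀ σ : Equiv.Perm (Fin n),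
      (∑ π : Equiv.Perm (Fin n), ((Equiv.Perm.sign σ : ℤ) : ℂ) *
        ∏ k, lcv (σ k) ^ (k : ℕ) * star (Um (j (π k)) (σ k)))
      = ((Equiv.Perm.sign σ : ℤ) : ℂ) * (∏ k, lcv (σ k) ^ (k : ℕ)) *
          ∑ ρ : Equiv.Perm (Fin n), ∏ m, star (Um (j (ρ m)) m) := by
    intro σ
    have step1 : ∀ ρ : Equiv.Perm (Fin n),
        (∏ k, lcv (σ k) ^ (k : ℕ) * star (Um (j ((ρ * σ) k)) (σ k)))
        = (∏ k, lcv (σ k) ^ (k : ℕ)) * ∏ m, star (Um (j (ρ m)) m) := by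
      intro ρ
      have h2 : (∏ k, lcv (σ k) ^ (k : ℕ) * star (Um (j ((ρ * σ) k)) (σ k)))
          = ∏ m, lcv m ^ ((σ⁻¹ m : Fin n) : ℕ) * star (Um (j (ρ m)) m) := by
        rw [← Equiv.prod_comp σ
          (fun m => lcv m ^ ((σ⁻¹ m : Fin n) : ℕ) * star (Um (j (ρ m)) m))]
        refine Finset.prod_congr rfl fun k _ => ?_
        simp [Equiv.Perm.mul_apply]
      rw [h2, Finset.prod_mul_distrib]
      congr 1
      rw [← Equiv.prod_comp σ (fun m => lcv m ^ ((σ⁻¹ m : Fin n) : ℕ))]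
      refine Finset.prod_congr rfl fun k _ => ?_
      simp
    calc (∑ π : Equiv.Perm (Fin n), ((Equiv.Perm.sign σ : ℤ) : ℂ) *
        ∏ k, lcv (σ k) ^ (k : ℕ) * star (Um (j (π k)) (σ k)))
        = ∑ ρ : Equiv.Perm (Fin n), ((Equiv.Perm.sign σ : ℤ) : ℂ) *
          ((∏ k, lcv (σ k) ^ (k : ℕ)) * ∏ m, star (Um (j (ρ m)) m)) := by
          refine (Fintype.sum_equiv (Equiv.mulRight σ) _ _ fun ρ => ?_).symm
          rw [← step1 ρ]
          rfl
      _ = _ := by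
          rw [← Finset.mul_sum, ← Finset.mul_sum, ← mul_assoc]
  simp only [hinner]
  rw [← Finset.sum_mul]
  congr 1
  rw [Matrix.det_apply']
  simp only [Matrix.vandermonde_apply]

lemma factor2 (j : Fin n → Fin n) :
    cval A j = (U hA).det * (Matrix.vandermonde (lc hA)).det * Qv hA j := by
  unfold cval
  have h1 : ∀ π : Equiv.Perm (Fin n),
      (Matrix.of fun (i k : Fin n) => (A ^ (k : ℕ)) i (j (π k))).det
      = (U hA).det *
        (Matrix.of fun (a k : Fin n) => lc hA a ^ (k : ℕ) * star (U hA (j (π k)) a)).det := by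
    intro π
    rw [show (Matrix.of fun (i k : Fin n) => (A ^ (k : ℕ)) i (j (π k)))
        = U hA * Matrix.of (fun (a k : Fin n) => lc hA a ^ (k : ℕ) * star (U hA (j (π k)) a))
      from factor1 hA (fun k => j (π k))]
    rw [Matrix.det_mul]
  simp only [h1]
  rw [← Finset.mul_sum, core_identity (U hA) (lc hA) j, mul_assoc]
  rfl

lemma Qsum : ∑ j : Fin n → Fin n, Qv hA j * star (Qv hA j) = (n.factorial : ℂ) := by
  classical
  have hU : star (U hA) * U hA = 1 := hUU hA
  set Um := U hA with hUm
  unfold Qv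
  have reind : ∀ (j : Fin n → Fin n) (ρ : Equiv.Perm (Fin n)) (g : Fin n → Fin n → ℂ),
      (∏ m, g (j (ρ m)) m) = ∏ i, g (j i) (ρ⁻¹ i) := by
    intro j ρ g
    rw [← Equiv.prod_comp ρ (fun i => g (j i) (ρ⁻¹ i))]
    exact Finset.prod_congr rfl fun m _ => by simp
  have expand : ∀ j : Fin n → Fin n,
      (∑ ρ : Equiv.Perm (Fin n), ∏ m, star (Um (j (ρ m)) m)) *
        star (∑ ρ : Equiv.Perm (Fin n), ∏ m, star (Um (j (ρ m)) m))
      = ∑ ρ : Equiv.Perm (Fin n), ∑ ρ' : Equiv.Perm (Fin n),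
          ∏ i, (star (Um (j i) (ρ⁻¹ i)) * Um (j i) (ρ'⁻¹ i)) := by
    intro j
    rw [star_sum, Finset.sum_mul_sum]
    refine Finset.sum_congr rfl fun ρ _ => Finset.sum_congr rfl fun ρ' _ => ?_
    rw [star_prod]
    simp only [star_star]
    rw [reind j ρ (fun a b => star (Um a b)), reind j ρ' (fun a b => Um a b),
      ← Finset.prod_mul_distrib]
  rw [Finset.sum_congr rfl fun j _ => expand j]
  rw [Finset.sum_comm]
  have swap2 : ∀ ρ : Equiv.Perm (Fin n),
      (∑ j : Fin n → Fin n, ∑ ρ' : Equiv.Perm (Fin n),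
        ∏ i, (star (Um (j i) (ρ⁻¹ i)) * Um (j i) (ρ'⁻¹ i)))
      = ∑ ρ' : Equiv.Perm (Fin n), ∑ j : Fin n → Fin n,
        ∏ i, (star (Um (j i) (ρ⁻¹ i)) * Um (j i) (ρ'⁻¹ i)) :=
    fun ρ => Finset.sum_comm
  simp only [swap2]
  have inner : ∀ ρ ρ' : Equiv.Perm (Fin n),
      (∑ j : Fin n → Fin n, ∏ i, (star (Um (j i) (ρ⁻¹ i)) * Um (j i) (ρ'⁻¹ i)))
      = if ρ = ρ' then 1 else 0 := by
    intro ρ ρ'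
    have fub : (∑ j : Fin n → Fin n, ∏ i, (star (Um (j i) (ρ⁻¹ i)) * Um (j i) (ρ'⁻¹ i)))
        = ∏ i, ∑ a, (star (Um a (ρ⁻¹ i)) * Um a (ρ'⁻¹ i)) := by
      rw [Finset.prod_univ_sum]
      rw [← Fintype.piFinset_univ]
    rw [fub]
    have col : ∀ i, (∑ a, (star (Um a (ρ⁻¹ i)) * Um a (ρ'⁻¹ i)))
        = if ρ⁻¹ i = ρ'⁻¹ i then 1 else 0 := by
      intro i
      have hone : (star Um * Um) (ρ⁻¹ i) (ρ'⁻¹ i)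
          = (1 : Matrix (Fin n) (Fin n) ℂ) (ρ⁻¹ i) (ρ'⁻¹ i) := by
        rw [hU]
      rw [Matrix.mul_apply] at hone
      simp only [Matrix.star_apply] at hone
      rw [hone, Matrix.one_apply]
    simp only [col]
    by_cases h : ρ = ρ'
    · subst h; simp
    · rw [if_neg h]
      have hex : ∃ i, ρ⁻¹ i ≠ ρ'⁻¹ i := by
        by_contra hc
        push_neg at hc
        apply h
        have : ρ⁻¹ = ρ'⁻¹ := Equiv.ext hc
        simpa using congrArg Inv.inv this
      obtain ⟨i, hi⟩ := hex
      exact Finset.prod_eq_zero (Finset.mem_univ i) (by rw [if_neg hi])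
  simp only [inner]
  simp [Finset.sum_ite_eq, Fintype.card_perm]

lemma main_sum :
    ∑ j : Fin n → Fin n, ‖cval A j‖ ^ 2 =
      (n.factorial : ℝ) * ∏ i : Fin n, ∏ j ∈ Finset.Ioi i,
        (hA.eigenvalues i - hA.eigenvalues j) ^ 2 := by
  classical
  set lam : Fin n → ℝ := hA.eigenvalues with hlam
  have hdU : (U hA).det * star ((U hA).det) = 1 := by
    have h1 : star ((U hA).det) = (star (U hA)).det := by
      rw [Matrix.star_eq_conjTranspose, Matrix.det_conjTranspose]
    rw [h1, ← Matrix.det_mul, hUU' hA, Matrix.det_one]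
  have hc : ∀ j, cval A j = (U hA).det * (Matrix.vandermonde (fun i => (lam i : ℂ))).det *
      Qv hA j := fun j => factor2 hA j
  have hQ := Qsum hA
  set Wr : ℝ := ∏ i : Fin n, ∏ j ∈ Finset.Ioi i, (lam j - lam i) with hWr
  have hW : (Matrix.vandermonde (fun i => (lam i : ℂ))).det = ((Wr : ℝ) : ℂ) := by
    rw [Matrix.det_vandermonde, hWr]
    push_cast
    rfl
  have hsq : ∀ z : ℂ, ((‖z‖^2 : ℝ) : ℂ) = z * star z := by
    intro z
    rw [show star z = (starRingEnd ℂ) z from rfl, Complex.mul_conj']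
    push_cast
    ring
  have key : ((∑ j : Fin n → Fin n, ‖cval A j‖ ^ 2 : ℝ) : ℂ)
      = ((n.factorial : ℝ) * Wr ^ 2 : ℝ) := by
    push_cast [hsq]
    calc ∑ j : Fin n → Fin n, cval A j * star (cval A j)
        = ∑ j : Fin n → Fin n,
            ((U hA).det * star ((U hA).det)) * ((Wr : ℂ) * star ((Wr : ℂ))) *
              (Qv hA j * star (Qv hA j)) := by
          refine Finset.sum_congr rfl fun j _ => ?_
          rw [hc j, hW]
          simp only [star_mul']
          ring
      _ = (Wr : ℂ) * star ((Wr : ℂ)) * ∑ j : Fin n → Fin n, Qv hA j * star (Qv hA j) := by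
          rw [← Finset.mul_sum, hdU, one_mul]
      _ = ((n.factorial : ℝ) : ℂ) * (Wr : ℂ) ^ 2 := by
          rw [hQ, show star ((Wr:ℝ):ℂ) = ((Wr:ℝ):ℂ) from Complex.conj_ofReal Wr]
          push_cast
          ring
      _ = _ := by push_cast; ring
  have hkey := Complex.ofReal_injective key
  rw [hkey]
  congr 1
  rw [hWr, ← Finset.prod_pow]
  refine Finset.prod_congr rfl fun i _ => ?_
  rw [← Finset.prod_pow]
  refine Finset.prod_congr rfl fun j _ => ?_
  rw [← neg_sub, neg_sq]

end Herm

end Stmt16Aux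

end

/-- The discriminant of Hermitian `n×n` matrices is a sum of
`2 · binom(2n-1, n-1)` squares: there are `N = binom(2n-1, n-1)` complex polynomial
functions whose squared absolute values sum to `∏_{i<j} (λᵢ - λⱼ)²` on Hermitian
matrices. -/
theorem stmt_16 (n : ℕ) (hn : 2 ≤ n) (N : ℕ) (hN : N = Nat.choose (2 * n - 1) (n - 1)) :
    ∃ q : Fin N → MvPolynomial (Fin n × Fin n) ℂ,
      ∀ A : Matrix (Fin n) (Fin n) ℂ, ∀ hA : A.IsHermitian,
        ∏ i : Fin n, ∏ j ∈ Finset.univ.filter (fun j => i < j),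
          (hA.eigenvalues i - hA.eigenvalues j) ^ 2
        = ∑ m : Fin N, ‖MvPolynomial.eval (fun p => A p.1 p.2) (q m)‖ ^ 2 := by
  classical
  open Stmt16Aux in
  -- the set of monotone tuples, the sorting map, and the fiber counts
  set M' : Finset (Fin n → Fin n) := Finset.univ.filter (fun t => Monotone t) with hM'
  set srt : (Fin n → Fin n) → (Fin n → Fin n) := fun j => j ∘ (Tuple.sort j) with hsrt
  set cnt : (Fin n → Fin n) → ℕ :=
    fun t => (Finset.univ.filter (fun j => srt j = t)).card with hcnt
  -- cardinality bound
  have hms_card : ∀ t : Fin n → Fin n,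
      Multiset.card ((List.ofFn t : List (Fin n)) : Multiset (Fin n)) = n := by
    intro t
    simp [Multiset.coe_card]
  set ms : (Fin n → Fin n) → Sym (Fin n) n :=
    fun t => ⟨((List.ofFn t : List (Fin n)) : Multiset (Fin n)), hms_card t⟩ with hms
  have hinj : Set.InjOn ms M' := by
    intro t ht t' ht' h
    have hmt : Monotone t := (Finset.mem_filter.mp ht).2
    have hmt' : Monotone t' := (Finset.mem_filter.mp ht').2
    have hperm : List.Perm (List.ofFn t) (List.ofFn t') := by
      have := congrArg Subtype.val h
      exact Multiset.coe_eq_coe.mp this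
    have := List.Perm.eq_of_sortedLE hmt.sortedLE_ofFn hmt'.sortedLE_ofFn hperm
    exact List.ofFn_injective this
  have hNcard : Fintype.card (Sym (Fin n) n) = N := by
    rw [Sym.card_sym_eq_choose, Fintype.card_fin, hN]
    have h1 : n + n - 1 = 2 * n - 1 := by omega
    rw [h1]
    have h2 : n - 1 ≤ 2 * n - 1 := by omega
    have h3 : 2 * n - 1 - (n - 1) = n := by omega
    rw [← Nat.choose_symm h2, h3]
  have hcard : M'.card ≤ N := by
    have := Finset.card_le_card_of_injOn ms (fun a _ => Finset.mem_univ (ms a)) hinj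
    simpa [hNcard] using this
  set k := M'.card with hk
  set e : ↥M' ≃ Fin k := M'.equivFin with he
  -- the polynomials
  set q : Fin N → MvPolynomial (Fin n × Fin n) ℂ := fun m =>
    if h : (m : ℕ) < k then
      MvPolynomial.C ((Real.sqrt (cnt ((e.symm ⟨(m : ℕ), h⟩ : ↥M') : Fin n → Fin n)
          / n.factorial) : ℝ) : ℂ) *
        Spoly n ((e.symm ⟨(m : ℕ), h⟩ : ↥M') : Fin n → Fin n)
    else 0 with hq
  have hk0 : 0 < k := by
    rw [hk]
    refine Finset.card_pos.mpr ⟨id, ?_⟩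
    rw [hM', Finset.mem_filter]
    exact ⟨Finset.mem_univ _, monotone_id⟩
  refine ⟨q, fun A hA => ?_⟩
  have hfac_pos : (0 : ℝ) < n.factorial := by positivity
  -- the squared norm attached to each index
  set f : (Fin n → Fin n) → ℝ := fun j => ‖cval A j‖ ^ 2 with hf
  have hfq : ∀ m : Fin N, ‖MvPolynomial.eval (fun p => A p.1 p.2) (q m)‖ ^ 2
      = if h : (m : ℕ) < k then
          (cnt ((e.symm ⟨(m : ℕ), h⟩ : ↥M') : Fin n → Fin n) / n.factorial : ℝ) *
            f ((e.symm ⟨(m : ℕ), h⟩ : ↥M') : Fin n → Fin n)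
        else 0 := by
    intro m
    by_cases h : (m : ℕ) < k
    · rw [hq]
      simp only [dif_pos h]
      set t : Fin n → Fin n := ((e.symm ⟨(m : ℕ), h⟩ : ↥M') : Fin n → Fin n)
      rw [_root_.map_mul, MvPolynomial.eval_C, eval_Spoly, norm_mul, mul_pow]
      congr 1
      rw [Complex.norm_real, Real.norm_eq_abs, sq_abs, Real.sq_sqrt]
      positivity
    · rw [hq]
      simp only [dif_neg h]
      simp
  -- sum over Fin N reduces to sum over the subtype
  have hsum1 : ∑ m : Fin N, ‖MvPolynomial.eval (fun p => A p.1 p.2) (q m)‖ ^ 2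
      = ∑ t ∈ M', (cnt t / n.factorial : ℝ) * f t := by
    simp only [hfq]
    rw [← Finset.sum_coe_sort M' (fun t => ((cnt t / n.factorial : ℝ) * f t))]
    rw [← Equiv.sum_comp e.symm
      (fun t : ↥M' => ((cnt (t : Fin n → Fin n) / n.factorial : ℝ) * f (t : Fin n → Fin n)))]
    rw [← Finset.sum_filter_of_ne (p := fun m : Fin N => (m : ℕ) < k)
      (f := fun m : Fin N => dite ((m : ℕ) < k)
        (fun h => (cnt ((e.symm ⟨(m : ℕ), h⟩ : ↥M') : Fin n → Fin n) / n.factorial : ℝ) *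
          f ((e.symm ⟨(m : ℕ), h⟩ : ↥M') : Fin n → Fin n)) (fun _ => 0))
      (by intro m _ hne; by_contra hc; exact hne (by simp [dif_neg hc]))]
    refine (Finset.sum_nbij' (fun i : Fin k => (⟨(i : ℕ), lt_of_lt_of_le i.2 hcard⟩ : Fin N))
      (fun m : Fin N => if h : (m : ℕ) < k then (⟨(m : ℕ), h⟩ : Fin k) else (⟨0, hk0⟩ : Fin k))
      ?_ ?_ ?_ ?_ ?_).symm
    · intro i _
      simp [Fin.is_lt]
    · intro m hm
      exact Finset.mem_univ _
    · intro i _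
      simp [Fin.is_lt]
    · intro m hm
      have hmk : (m : ℕ) < k := by simpa using hm
      simp [dif_pos hmk]
    · intro i _
      have hik : ((⟨(i : ℕ), lt_of_lt_of_le i.2 hcard⟩ : Fin N) : ℕ) < k := i.2
      rw [dif_pos hik]
  -- regrouping: fiberwise sum
  have hmono_srt : ∀ j : Fin n → Fin n, srt j ∈ M' := by
    intro j
    rw [hM', Finset.mem_filter]
    exact ⟨Finset.mem_univ _, Tuple.monotone_sort j⟩
  have hf_srt : ∀ j : Fin n → Fin n, f (srt j) = f j := by
    intro j
    rw [hf, hsrt]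
    simp only
    rw [cval_comp A j (Tuple.sort j)]
  have hregroup : ∑ t ∈ M', (cnt t : ℝ) * f t = ∑ j : Fin n → Fin n, f j := by
    rw [← Finset.sum_fiberwise_of_maps_to (fun j _ => hmono_srt j) f]
    refine Finset.sum_congr rfl fun t ht => ?_
    have : ∀ j ∈ Finset.univ.filter (fun j => srt j = t), f j = f t := by
      intro j hj
      have hjt : srt j = t := (Finset.mem_filter.mp hj).2
      rw [← hjt, hf_srt j]
    rw [Finset.sum_congr rfl this, Finset.sum_const, hcnt]
    simp [nsmul_eq_mul]
  -- put everything together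
  rw [hsum1]
  have hdiv : ∑ t ∈ M', (cnt t / n.factorial : ℝ) * f t
      = (∑ t ∈ M', (cnt t : ℝ) * f t) / n.factorial := by
    rw [Finset.sum_div]
    refine Finset.sum_congr rfl fun t _ => ?_
    ring
  rw [hdiv, hregroup, main_sum hA]
  rw [mul_comm, mul_div_assoc, div_self (ne_of_gt hfac_pos), mul_one]
  refine Finset.prod_congr rfl fun i _ => ?_
  refine Finset.prod_congr ?_ fun j _ => rfl
  ext j
  simp [Finset.mem_Ioi]
end

section
/- Let n ≥ 2 and 1 ≤ k ≤ n−1. For A ∈ Matrix (Fin n) (Fin n) ℂ define f_k(A) ∈ ℂ as the determinant of the (n−k)×(n−k) matrix whose (r, c) entry, for 1 ≤ r, c ≤ n−k, is the (k+r, 1) entry of A^c (i.e. the submatrix of the n×(n−k) matrix with columns A·e₁, A²·e₁, …, A^{n−k}·e₁ consisting of rows k+1, …, n). Then f_k is invariant under conjugation by upper unitriangular matrices: for every upper triangular g ∈ Matrix (Fin n) (Fin n) ℂ with all diagonal entries equal to 1, f_k(g·A·g⁻¹) = f_k(A) for all A. -/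
/-- Tange's highest weight vector `f_k` — the determinant of the submatrix of
`(A·e₁ | A²·e₁ | ⋯ | A^{n-k}·e₁)` consisting of the last `n-k` rows — is invariant
under conjugation by upper unitriangular matrices. -/
theorem stmt_18 (n k : ℕ) (hn : 2 ≤ n) (hk1 : 1 ≤ k) (hk : k ≤ n - 1)
    (fk : Matrix (Fin n) (Fin n) ℂ → ℂ)
    (hfk : ∀ A : Matrix (Fin n) (Fin n) ℂ,
      fk A = Matrix.det (Matrix.of fun r c : Fin (n - k) =>
        (A ^ ((c : ℕ) + 1))
          ⟨k + (r : ℕ), by have := r.isLt; omega⟩ ⟨0, by omega⟩)) :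
    ∀ g : Matrix (Fin n) (Fin n) ℂ,
      (∀ i j : Fin n, j < i → g i j = 0) → (∀ i : Fin n, g i i = 1) →
      ∀ A : Matrix (Fin n) (Fin n) ℂ, fk (g * A * g⁻¹) = fk A := by
  intro g hg0 hg1 A
  have hn0 : 0 < n := by omega
  have hi : ∀ r : Fin (n - k), k + (r : ℕ) < n := fun r => by have := r.isLt; omega
  have hdet : g.det = 1 := by
    have hbt : g.BlockTriangular id := fun i j h => hg0 i j h
    rw [Matrix.det_of_upperTriangular hbt]
    simp [hg1]
  have hu : IsUnit g.det := by rw [hdet]; exact isUnit_one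
  have hgi : g⁻¹ * g = 1 := Matrix.nonsing_inv_mul g hu
  -- first column of g⁻¹ is e₁
  have hcol : ∀ l : Fin n, g⁻¹ l ⟨0, hn0⟩ = if l = ⟨0, hn0⟩ then 1 else 0 := by
    intro l
    have h1 : (g⁻¹ * g) l ⟨0, hn0⟩ = g⁻¹ l ⟨0, hn0⟩ := by
      rw [Matrix.mul_apply]
      rw [Finset.sum_eq_single (⟨0, hn0⟩ : Fin n)]
      · rw [hg1]; ring
      · intro b _ hb
        have hb' : (⟨0, hn0⟩ : Fin n) < b := by
          rw [Fin.lt_def]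
          exact Nat.pos_of_ne_zero (fun h => hb (Fin.ext h))
        rw [hg0 b ⟨0, hn0⟩ hb', mul_zero]
      · intro h; exact absurd (Finset.mem_univ _) h
    rw [← h1, hgi, Matrix.one_apply]
  have cancel : ∀ X : Matrix (Fin n) (Fin n) ℂ, g⁻¹ * (g * X) = X := fun X => by
    rw [← Matrix.mul_assoc, hgi, Matrix.one_mul]
  have hpow : ∀ m : ℕ, (g * A * g⁻¹) ^ (m + 1) = g * A ^ (m + 1) * g⁻¹ := by
    intro m
    induction m with
    | zero => simp
    | succ m ih =>
      rw [pow_succ, ih, pow_succ]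
      simp only [Matrix.mul_assoc]
      rw [cancel]
      simp [pow_succ, Matrix.mul_assoc]
  -- entry computation for the conjugated matrix
  have hentry : ∀ (p : ℕ) (i : Fin n),
      (g * A ^ p * g⁻¹) i ⟨0, hn0⟩ = ∑ j : Fin n, g i j * (A ^ p) j ⟨0, hn0⟩ := by
    intro p i
    rw [Matrix.mul_apply]
    rw [Finset.sum_eq_single (⟨0, hn0⟩ : Fin n)]
    · rw [hcol, if_pos rfl, mul_one, Matrix.mul_apply]
    · intro b _ hb
      rw [hcol, if_neg hb, mul_zero]
    · intro h; exact absurd (Finset.mem_univ _) h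
  -- the lower-right corner of g
  set L : Matrix (Fin (n - k)) (Fin (n - k)) ℂ :=
    Matrix.of fun r s : Fin (n - k) => g ⟨k + (r : ℕ), hi r⟩ ⟨k + (s : ℕ), hi s⟩ with hL
  have hLdet : L.det = 1 := by
    have hbt : L.BlockTriangular id := by
      intro s t h
      apply hg0
      rw [Fin.lt_def]
      simpa using h
    rw [Matrix.det_of_upperTriangular hbt]
    apply Finset.prod_eq_one
    intro s _
    exact hg1 _
  -- reindexing the sum
  have hsum : ∀ (p : ℕ) (r : Fin (n - k)),
      (∑ j : Fin n, g ⟨k + (r : ℕ), hi r⟩ j * (A ^ p) j ⟨0, hn0⟩)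
        = ∑ s : Fin (n - k),
            g ⟨k + (r : ℕ), hi r⟩ ⟨k + (s : ℕ), hi s⟩ * (A ^ p) ⟨k + (s : ℕ), hi s⟩ ⟨0, hn0⟩ := by
    intro p r
    set T : ℕ → ℂ := fun j =>
      if h : j < n then g ⟨k + (r : ℕ), hi r⟩ ⟨j, h⟩ * (A ^ p) ⟨j, h⟩ ⟨0, hn0⟩ else 0 with hT
    have h1 : (∑ j : Fin n, g ⟨k + (r : ℕ), hi r⟩ j * (A ^ p) j ⟨0, hn0⟩)
        = ∑ j ∈ Finset.range n, T j := by
      rw [← Fin.sum_univ_eq_sum_range T n]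
      apply Finset.sum_congr rfl
      intro j _
      rw [hT]
      simp only [j.isLt, dif_pos, Fin.eta]
    have h2 : (∑ s : Fin (n - k),
          g ⟨k + (r : ℕ), hi r⟩ ⟨k + (s : ℕ), hi s⟩ * (A ^ p) ⟨k + (s : ℕ), hi s⟩ ⟨0, hn0⟩)
        = ∑ s ∈ Finset.range (n - k), T (k + s) := by
      rw [← Fin.sum_univ_eq_sum_range (fun s => T (k + s)) (n - k)]
      apply Finset.sum_congr rfl
      intro s _
      rw [hT]
      simp only [hi s, dif_pos]
    rw [h1, h2, ← Finset.sum_Ico_eq_sum_range]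
    rw [Finset.range_eq_Ico, ← Finset.sum_Ico_consecutive T (Nat.zero_le k) (by omega : k ≤ n)]
    have h3 : (∑ j ∈ Finset.Ico 0 k, T j) = 0 := by
      apply Finset.sum_eq_zero
      intro j hj
      rw [Finset.mem_Ico] at hj
      have hjn : j < n := by omega
      rw [hT]
      simp only [hjn, dif_pos]
      rw [hg0 _ _ (by rw [Fin.lt_def]; simp; omega), zero_mul]
    rw [h3, zero_add]
  -- put it together
  rw [hfk, hfk]
  have key : (Matrix.of fun r c : Fin (n - k) =>
      ((g * A * g⁻¹) ^ ((c : ℕ) + 1))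
        ⟨k + (r : ℕ), by have := r.isLt; omega⟩ ⟨0, by omega⟩)
      = L * (Matrix.of fun r c : Fin (n - k) =>
      (A ^ ((c : ℕ) + 1))
        ⟨k + (r : ℕ), by have := r.isLt; omega⟩ ⟨0, by omega⟩) := by
    ext r c
    rw [Matrix.mul_apply]
    simp only [Matrix.of_apply]
    rw [hpow, hentry, hsum]
    rfl
  rw [key, Matrix.det_mul, hLdet, one_mul]
end
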